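/- arXiv:2506.06835 — 7 statements merged into one kernel-verified Lean document; each statement's English description precedes it below -/
import Mathlib

section
/- Let n ≥ 1 and let a, b, c, d ∈ {1,…,n} be pairwise distinct. Then (H_{c,d}·H_{a,c}·H_{b,d})⁴ = H_{a,b}·H_{c,d} as n×n real matrices. -/
open Matrix

noncomputable section

/-- `Z_a`: identity matrix except entry `(a,a)` is `-1`. -/
def Zmat (n : ℕ) (a : Fin n) : Matrix (Fin n) (Fin n) ℝ :=
  fun i j => if i = j then (if i = a then -1 else 1) else 0

/-- `X_{b,c}`: the permutation matrix exchanging the `b`-th and `c`-th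
standard basis vectors. -/
def Xmat (n : ℕ) (b c : Fin n) : Matrix (Fin n) (Fin n) ℝ :=
  fun i j => if j = Equiv.swap b c i then 1 else 0

/-- `H_{b,c}`: identity except entries `(b,b), (b,c), (c,b)` equal `1/√2`
and entry `(c,c)` equals `-1/√2`. -/
def Hmat (n : ℕ) (b c : Fin n) : Matrix (Fin n) (Fin n) ℝ :=
  fun i j =>
    if i = b ∧ j = b then 1 / Real.sqrt 2
    else if i = b ∧ j = c then 1 / Real.sqrt 2
    else if i = c ∧ j = b then 1 / Real.sqrt 2
    else if i = c ∧ j = c then -(1 / Real.sqrt 2)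
    else if i = j then 1 else 0

/-- Generators of `𝒢_n`. -/
inductive Gen (n : ℕ) : Type
  | Z : Fin n → Gen n
  | X : (b c : Fin n) → b ≠ c → Gen n
  | H : (b c : Fin n) → b ≠ c → Gen n

/-- Semantics of a generator. -/
def gsem {n : ℕ} : Gen n → Matrix (Fin n) (Fin n) ℝ
  | Gen.Z a => Zmat n a
  | Gen.X b c _ => Xmat n b c
  | Gen.H b c _ => Hmat n b c

/-- Semantics of a word (rightmost generator acts first). -/
def wsem {n : ℕ} : List (Gen n) → Matrix (Fin n) (Fin n) ℝ
  | [] => 1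
  | g :: w => gsem g * wsem w

/-- The smallest congruence `≈` on words over `𝒢_n` containing the relations
(a1)-(d4), (e1), (e2) of the paper. -/
inductive WRel (n : ℕ) : List (Gen n) → List (Gen n) → Prop
  | rel_zz (a : Fin n) : WRel n [Gen.Z a, Gen.Z a] []
  | rel_xx (a b : Fin n) (hab : a ≠ b) : WRel n [Gen.X a b hab, Gen.X a b hab] []
  | rel_hh (a b : Fin n) (hab : a ≠ b) : WRel n [Gen.H a b hab, Gen.H a b hab] []
  | rel_zz_comm (a b : Fin n) (hab : a ≠ b) : WRel n [Gen.Z a, Gen.Z b] [Gen.Z b, Gen.Z a]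
  | rel_zx_comm (a b c : Fin n) (hab : a ≠ b) (hac : a ≠ c) (hbc : b ≠ c) :
      WRel n [Gen.Z a, Gen.X b c hbc] [Gen.X b c hbc, Gen.Z a]
  | rel_xx_comm (a b c d : Fin n) (hab : a ≠ b) (hac : a ≠ c) (had : a ≠ d)
      (hbc : b ≠ c) (hbd : b ≠ d) (hcd : c ≠ d) :
      WRel n [Gen.X a b hab, Gen.X c d hcd] [Gen.X c d hcd, Gen.X a b hab]
  | rel_zh_comm (a b c : Fin n) (hab : a ≠ b) (hac : a ≠ c) (hbc : b ≠ c) :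
      WRel n [Gen.Z a, Gen.H b c hbc] [Gen.H b c hbc, Gen.Z a]
  | rel_xh_comm (a b c d : Fin n) (hab : a ≠ b) (hac : a ≠ c) (had : a ≠ d)
      (hbc : b ≠ c) (hbd : b ≠ d) (hcd : c ≠ d) :
      WRel n [Gen.X a b hab, Gen.H c d hcd] [Gen.H c d hcd, Gen.X a b hab]
  | rel_hh_comm (a b c d : Fin n) (hab : a ≠ b) (hac : a ≠ c) (had : a ≠ d)
      (hbc : b ≠ c) (hbd : b ≠ d) (hcd : c ≠ d) :
      WRel n [Gen.H a b hab, Gen.H c d hcd] [Gen.H c d hcd, Gen.H a b hab]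
  | rel_zx (a b : Fin n) (hab : a ≠ b) :
      WRel n [Gen.Z a, Gen.X a b hab] [Gen.X a b hab, Gen.Z b]
  | rel_xc2 (a b c : Fin n) (hab : a ≠ b) (hac : a ≠ c) (hbc : b ≠ c) :
      WRel n [Gen.X b c hbc, Gen.X a b hab] [Gen.X a b hab, Gen.X a c hac]
  | rel_xc3 (a b c : Fin n) (hab : a ≠ b) (hac : a ≠ c) (hbc : b ≠ c) :
      WRel n [Gen.X a c hac, Gen.X b c hbc] [Gen.X b c hbc, Gen.X a b hab]
  | rel_hx4 (a b c : Fin n) (hab : a ≠ b) (hac : a ≠ c) (hbc : b ≠ c) :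
      WRel n [Gen.H b c hbc, Gen.X a b hab] [Gen.X a b hab, Gen.H a c hac]
  | rel_hx5 (a b c : Fin n) (hab : a ≠ b) (hac : a ≠ c) (hbc : b ≠ c) :
      WRel n [Gen.H a c hac, Gen.X b c hbc] [Gen.X b c hbc, Gen.H a b hab]
  | rel_zzh (a b : Fin n) (hab : a ≠ b) :
      WRel n [Gen.Z a, Gen.Z b, Gen.H a b hab] [Gen.H a b hab, Gen.Z a, Gen.Z b]
  | rel_zh (a b : Fin n) (hab : a ≠ b) :
      WRel n [Gen.Z b, Gen.H a b hab] [Gen.H a b hab, Gen.X a b hab]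
  | rel_d3 (a b c d : Fin n) (hab : a ≠ b) (hac : a ≠ c) (had : a ≠ d)
      (hbc : b ≠ c) (hbd : b ≠ d) (hcd : c ≠ d) :
      WRel n
        ([Gen.H c d hcd, Gen.H a c hac, Gen.H b d hbd] ++
         [Gen.H c d hcd, Gen.H a c hac, Gen.H b d hbd] ++
         [Gen.H c d hcd, Gen.H a c hac, Gen.H b d hbd] ++
         [Gen.H c d hcd, Gen.H a c hac, Gen.H b d hbd])
        [Gen.H a b hab, Gen.H c d hcd]
  | rel_d4 (a b c d e f : Fin n) (hab : a ≠ b) (hac : a ≠ c) (had : a ≠ d)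
      (hae : a ≠ e) (haf : a ≠ f) (hbc : b ≠ c) (hbd : b ≠ d) (hbe : b ≠ e)
      (hbf : b ≠ f) (hcd : c ≠ d) (hce : c ≠ e) (hcf : c ≠ f) (hde : d ≠ e)
      (hdf : d ≠ f) (hef : e ≠ f) :
      WRel n
        ([Gen.H a c hac, Gen.H b d hbd, Gen.H a b hab, Gen.H a c hac,
          Gen.H b d hbd, Gen.X c e hce, Gen.X d f hdf] ++
         [Gen.H a c hac, Gen.H b d hbd, Gen.H a b hab, Gen.H a c hac,
          Gen.H b d hbd, Gen.X c e hce, Gen.X d f hdf] ++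
         [Gen.H a c hac, Gen.H b d hbd, Gen.H a b hab, Gen.H a c hac,
          Gen.H b d hbd, Gen.X c e hce, Gen.X d f hdf])
        [Gen.H c e hce, Gen.H d f hdf, Gen.H e f hef, Gen.H c e hce,
         Gen.H d f hdf, Gen.X c e hce, Gen.X d f hdf]
  | rel_x_swap (b c : Fin n) (hbc : b ≠ c) :
      WRel n [Gen.X c b (Ne.symm hbc)] [Gen.X b c hbc]
  | rel_h_swap (b c : Fin n) (hbc : b ≠ c) :
      WRel n [Gen.H c b (Ne.symm hbc)] [Gen.X b c hbc, Gen.H b c hbc, Gen.X b c hbc]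
  | refl (w : List (Gen n)) : WRel n w w
  | symm {u v : List (Gen n)} : WRel n u v → WRel n v u
  | trans {u v w : List (Gen n)} : WRel n u v → WRel n v w → WRel n u w
  | append_left (w : List (Gen n)) {u v : List (Gen n)} :
      WRel n u v → WRel n (w ++ u) (w ++ v)
  | append_right (w : List (Gen n)) {u v : List (Gen n)} :
      WRel n u v → WRel n (u ++ w) (v ++ w)

/-- Membership in the ring `ℤ[√2] ⊆ ℝ`. -/
def inZsqrt2 (x : ℝ) : Prop := ∃ a b : ℤ, x = (a : ℝ) + (b : ℝ) * Real.sqrt 2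

/-- Membership in the ring `ℤ[1/√2] ⊆ ℝ`. -/
def inZinvsqrt2 (x : ℝ) : Prop := ∃ k : ℕ, inZsqrt2 (Real.sqrt 2 ^ k * x)

/-- `u ≡ v (mod 2)`, i.e. `(u - v)/2 ∈ ℤ[√2]`. -/
def cong2 (u v : ℝ) : Prop := inZsqrt2 ((u - v) / 2)

/-- Least denominator exponent of a scalar. -/
def lde (x : ℝ) : ℕ := sInf {k : ℕ | inZsqrt2 (Real.sqrt 2 ^ k * x)}

/-- Least denominator exponent of a vector. -/
def ldeVec {m : ℕ} (v : Fin m → ℝ) : ℕ :=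
  sInf {k : ℕ | ∀ i, inZsqrt2 (Real.sqrt 2 ^ k * v i)}

/-- The largest (1-based) index `j` such that the `j`-th column of `M` differs
from the `j`-th standard basis vector (`0` if `M` is the identity). -/
def levelJ {n : ℕ} (M : Matrix (Fin n) (Fin n) ℝ) : ℕ :=
  sSup {m : ℕ | ∃ i : Fin n, m = (i : ℕ) + 1 ∧
    ∃ r : Fin n, M r i ≠ (if r = i then (1 : ℝ) else 0)}

/-- The `levelJ M`-th column of `M` (junk if `n = 0`). -/
def levelCol {n : ℕ} (M : Matrix (Fin n) (Fin n) ℝ) : Fin n → ℝ :=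
  fun r => if h : levelJ M - 1 < n then M r ⟨levelJ M - 1, h⟩ else 0

/-- The level `(j, k, l)` of a matrix, as an element of `ℕ ×ₗ (ℕ ×ₗ ℕ)`
(lexicographic order). -/
def level {n : ℕ} (M : Matrix (Fin n) (Fin n) ℝ) : ℕ ×ₗ (ℕ ×ₗ ℕ) :=
  if levelJ M = 0 then toLex (0, toLex (0, 0))
  else if ldeVec (levelCol M) = 0 then toLex (levelJ M, toLex (0, 0))
  else
    toLex (levelJ M, toLex (ldeVec (levelCol M),
      Nat.card {i : Fin n //
        cong2 (Real.sqrt 2 ^ ldeVec (levelCol M) * levelCol M i) 1 ∨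
        cong2 (Real.sqrt 2 ^ ldeVec (levelCol M) * levelCol M i) (1 + Real.sqrt 2)}))

/-- The level of the sequence of intermediate states obtained by applying the
generators of a word (rightmost first) to a state `s`: the maximum of the
levels of all intermediate states. -/
def seqLevel {n : ℕ} : List (Gen n) → Matrix (Fin n) (Fin n) ℝ → ℕ ×ₗ (ℕ ×ₗ ℕ)
  | [], s => level s
  | g :: w, s => max (level (gsem g * (wsem w * s))) (seqLevel w s)

/-- The basic generators `𝒢'_n = {X_{1,x} : 2 ≤ x ≤ n} ∪ {Z_1, H_{1,2}}`
(written with 1-based indices). -/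
def Gen.isBasic {n : ℕ} : Gen n → Prop
  | Gen.Z a => (a : ℕ) = 0
  | Gen.X b _ _ => (b : ℕ) = 0
  | Gen.H b c _ => (b : ℕ) = 0 ∧ (c : ℕ) = 1

/-- A generator with ordered indices (`b < c` for `X_{b,c}` and `H_{b,c}`). -/
def Gen.ordered {n : ℕ} : Gen n → Prop
  | Gen.Z _ => True
  | Gen.X b c _ => b < c
  | Gen.H b c _ => b < c


/-- Generic Hadamard-type matrix with abstract scalar `s`. -/
def Hg (n : ℕ) (s : ℝ) (b c : Fin n) : Matrix (Fin n) (Fin n) ℝ :=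
  fun i j =>
    if i = b ∧ j = b then s
    else if i = b ∧ j = c then s
    else if i = c ∧ j = b then s
    else if i = c ∧ j = c then -s
    else if i = j then 1 else 0

lemma Hmat_eq_Hg (n : ℕ) (b c : Fin n) : Hmat n b c = Hg n (1 / Real.sqrt 2) b c := rfl

lemma hgMulVec {n : ℕ} (s : ℝ) (b c : Fin n) (hbc : b ≠ c) (v : Fin n → ℝ) (i : Fin n) :
    (Hg n s b c *ᵥ v) i =
      if i = b then s * v b + s * v c
      else if i = c then s * v b - s * v c
      else v i := by
  simp only [Matrix.mulVec, dotProduct]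
  rcases eq_or_ne i b with rfl | hib
  · simp only [if_pos rfl]
    have key : ∀ k ∈ Finset.univ, Hg n s i c i k * v k =
        (if k = i then s * v i else 0) + (if k = c then s * v c else 0) := by
      intro k _
      rcases eq_or_ne k i with rfl | h1
      · simp [Hg, hbc, hbc.symm]
      · rcases eq_or_ne k c with rfl | h2
        · simp [Hg, hbc, hbc.symm, h1]
        · simp [Hg, hbc, hbc.symm, h1, h2, Ne.symm h1]
    rw [Finset.sum_congr rfl key, Finset.sum_add_distrib, Finset.sum_ite_eq',
      Finset.sum_ite_eq']
    simp
  · rcases eq_or_ne i c with rfl | hic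
    · simp only [if_neg hib, if_pos rfl]
      have key : ∀ k ∈ Finset.univ, Hg n s b i i k * v k =
          (if k = b then s * v b else 0) + (if k = i then -s * v i else 0) := by
        intro k _
        rcases eq_or_ne k b with rfl | h1
        · simp [Hg, hib, Ne.symm hib]
        · rcases eq_or_ne k i with rfl | h2
          · simp [Hg, hib, Ne.symm hib, h1]
          · simp [Hg, hib, Ne.symm hib, h1, h2, Ne.symm h2, Ne.symm h1]
      rw [Finset.sum_congr rfl key, Finset.sum_add_distrib, Finset.sum_ite_eq',
        Finset.sum_ite_eq']
      simp
      ring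
    · simp only [if_neg hib, if_neg hic]
      have key : ∀ k ∈ Finset.univ, Hg n s b c i k * v k =
          if k = i then v i else 0 := by
        intro k _
        rcases eq_or_ne k i with rfl | h
        · simp [Hg, hib, hic]
        · simp [Hg, hib, hic, h, Ne.symm h]
      rw [Finset.sum_congr rfl key, Finset.sum_ite_eq']
      simp

lemma mat_ext_of_mulVec {n : ℕ} {M N : Matrix (Fin n) (Fin n) ℝ}
    (h : ∀ v : Fin n → ℝ, M *ᵥ v = N *ᵥ v) : M = N := by
  ext i j
  have := congrFun (h (fun k => if k = j then 1 else 0)) i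
  simpa [Matrix.mulVec, dotProduct, mul_ite, mul_one, mul_zero,
    Finset.sum_ite_eq'] using this

lemma d3_generic (n : ℕ) (s : ℝ) (hs : s * s = 1 / 2) (a b c d : Fin n)
    (hab : a ≠ b) (hac : a ≠ c) (had : a ≠ d)
    (hbc : b ≠ c) (hbd : b ≠ d) (hcd : c ≠ d) :
    (Hg n s c d * Hg n s a c * Hg n s b d) ^ 4 = Hg n s a b * Hg n s c d := by
  have p2 : s ^ 2 = 1 / 2 := by rw [sq]; exact hs
  have p3 : s ^ 3 = s / 2 := by rw [pow_succ, p2]; ring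
  have p4 : s ^ 4 = 1 / 4 := by rw [pow_succ, p3, div_mul_eq_mul_div, hs]; ring
  have p5 : s ^ 5 = s / 4 := by rw [pow_succ, p4]; ring
  have p6 : s ^ 6 = 1 / 8 := by rw [pow_succ, p5]; rw [div_mul_eq_mul_div, hs]; ring
  have p7 : s ^ 7 = s / 8 := by rw [pow_succ, p6]; ring
  have p8 : s ^ 8 = 1 / 16 := by rw [pow_succ, p7]; rw [div_mul_eq_mul_div, hs]; ring
  have p9 : s ^ 9 = s / 16 := by rw [pow_succ, p8]; ring
  have p10 : s ^ 10 = 1 / 32 := by rw [pow_succ, p9]; rw [div_mul_eq_mul_div, hs]; ring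
  have p11 : s ^ 11 = s / 32 := by rw [pow_succ, p10]; ring
  have p12 : s ^ 12 = 1 / 64 := by rw [pow_succ, p11]; rw [div_mul_eq_mul_div, hs]; ring
  have hba := hab.symm
  have hca := hac.symm
  have hda := had.symm
  have hcb := hbc.symm
  have hdb := hbd.symm
  have hdc := hcd.symm
  apply mat_ext_of_mulVec
  intro v
  funext i
  rw [show ((Hg n s c d * Hg n s a c * Hg n s b d) ^ 4) =
      (Hg n s c d * Hg n s a c * Hg n s b d) * ((Hg n s c d * Hg n s a c * Hg n s b d) *
      ((Hg n s c d * Hg n s a c * Hg n s b d) * (Hg n s c d * Hg n s a c * Hg n s b d))) by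
        simp only [pow_succ, pow_zero, one_mul, Matrix.mul_assoc]]
  simp only [← Matrix.mulVec_mulVec]
  rcases eq_or_ne i a with hia | hia
  · simp only [hgMulVec s c d hcd, hgMulVec s a c hac, hgMulVec s b d hbd,
      hgMulVec s a b hab, hia, hab, hac, had, hbc, hbd, hcd,
      hba, hca, hda, hcb, hdb, hdc, if_neg, if_true, ite_false, ite_true, if_false,
      ne_eq, not_false_eq_true]
    ring_nf
    simp only [p2, p3, p4, p5, p6, p7, p8, p9, p10, p11, p12]
    ring
  · rcases eq_or_ne i b with hib | hib
    · simp only [hgMulVec s c d hcd, hgMulVec s a c hac, hgMulVec s b d hbd,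
        hgMulVec s a b hab, hia, hib, hab, hac, had, hbc, hbd, hcd,
        hba, hca, hda, hcb, hdb, hdc, if_neg, if_true, ite_false, ite_true, if_false,
        ne_eq, not_false_eq_true]
      ring_nf
      simp only [p2, p3, p4, p5, p6, p7, p8, p9, p10, p11, p12]
      ring
    · rcases eq_or_ne i c with hic | hic
      · simp only [hgMulVec s c d hcd, hgMulVec s a c hac, hgMulVec s b d hbd,
          hgMulVec s a b hab, hia, hib, hic, hab, hac, had, hbc, hbd, hcd,
          hba, hca, hda, hcb, hdb, hdc, if_neg, if_true, ite_false, ite_true, if_false,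
          ne_eq, not_false_eq_true]
        ring_nf
        simp only [p2, p3, p4, p5, p6, p7, p8, p9, p10, p11, p12]
        ring
      · rcases eq_or_ne i d with hid | hid
        · simp only [hgMulVec s c d hcd, hgMulVec s a c hac, hgMulVec s b d hbd,
            hgMulVec s a b hab, hia, hib, hic, hid, hab, hac, had, hbc, hbd, hcd,
            hba, hca, hda, hcb, hdb, hdc, if_neg, if_true, ite_false, ite_true, if_false,
            ne_eq, not_false_eq_true]
          ring_nf
          simp only [p2, p3, p4, p5, p6, p7, p8, p9, p10, p11, p12]
          ring
        · simp only [hgMulVec s c d hcd, hgMulVec s a c hac, hgMulVec s b d hbd,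
            hgMulVec s a b hab, hia, hib, hic, hid, hab, hac, had, hbc, hbd, hcd,
            hba, hca, hda, hcb, hdb, hdc, if_neg, if_true, ite_false, ite_true, if_false,
            ne_eq, not_false_eq_true]

theorem d3_matrix (n : ℕ) (hn : 1 ≤ n) (a b c d : Fin n)
    (hab : a ≠ b) (hac : a ≠ c) (had : a ≠ d)
    (hbc : b ≠ c) (hbd : b ≠ d) (hcd : c ≠ d) :
    (Hmat n c d * Hmat n a c * Hmat n b d) ^ 4 = Hmat n a b * Hmat n c d := by
  simp only [Hmat_eq_Hg]
  apply d3_generic _ _ ?_ _ _ _ _ hab hac had hbc hbd hcd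
  rw [div_mul_div_comm, Real.mul_self_sqrt (by norm_num)]
  norm_num
end
end

section
/- Let n ≥ 1 and let a, b, c, d, e, f ∈ {1,…,n} be pairwise distinct. Then (H_{a,c}·H_{b,d}·H_{a,b}·H_{a,c}·H_{b,d}·X_{c,e}·X_{d,f})³ = H_{c,e}·H_{d,f}·H_{e,f}·H_{c,e}·H_{d,f}·X_{c,e}·X_{d,f} as n×n real matrices. -/
open Matrix

noncomputable section

namespace D4Aux

/-- `√2 · H` over `ℤ√2`. -/
def H2 (x y : Fin 6) : Matrix (Fin 6) (Fin 6) (ℤ√2) :=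
  fun i j =>
    if i = x ∧ j = x then 1
    else if i = x ∧ j = y then 1
    else if i = y ∧ j = x then 1
    else if i = y ∧ j = y then -1
    else if i = j then Zsqrtd.sqrtd else 0

def X2 (x y : Fin 6) : Matrix (Fin 6) (Fin 6) (ℤ√2) :=
  fun i j => if j = Equiv.swap x y i then 1 else 0

def mL1 : Matrix (Fin 6) (Fin 6) (ℤ√2) :=
  !![(⟨0,1⟩), (⟨0,0⟩), (⟨0,1⟩), (⟨0,0⟩), (⟨0,0⟩), (⟨0,0⟩);
  (⟨0,0⟩), (⟨0,1⟩), (⟨0,0⟩), (⟨0,1⟩), (⟨0,0⟩), (⟨0,0⟩);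
  (⟨0,1⟩), (⟨0,0⟩), (⟨0,-1⟩), (⟨0,0⟩), (⟨0,0⟩), (⟨0,0⟩);
  (⟨0,0⟩), (⟨0,1⟩), (⟨0,0⟩), (⟨0,-1⟩), (⟨0,0⟩), (⟨0,0⟩);
  (⟨0,0⟩), (⟨0,0⟩), (⟨0,0⟩), (⟨0,0⟩), (⟨2,0⟩), (⟨0,0⟩);
  (⟨0,0⟩), (⟨0,0⟩), (⟨0,0⟩), (⟨0,0⟩), (⟨0,0⟩), (⟨2,0⟩)]

def mL2 : Matrix (Fin 6) (Fin 6) (ℤ√2) :=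
  !![(⟨0,1⟩), (⟨0,1⟩), (⟨2,0⟩), (⟨0,0⟩), (⟨0,0⟩), (⟨0,0⟩);
  (⟨0,1⟩), (⟨0,-1⟩), (⟨0,0⟩), (⟨2,0⟩), (⟨0,0⟩), (⟨0,0⟩);
  (⟨0,1⟩), (⟨0,1⟩), (⟨-2,0⟩), (⟨0,0⟩), (⟨0,0⟩), (⟨0,0⟩);
  (⟨0,1⟩), (⟨0,-1⟩), (⟨0,0⟩), (⟨-2,0⟩), (⟨0,0⟩), (⟨0,0⟩);
  (⟨0,0⟩), (⟨0,0⟩), (⟨0,0⟩), (⟨0,0⟩), (⟨0,2⟩), (⟨0,0⟩);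
  (⟨0,0⟩), (⟨0,0⟩), (⟨0,0⟩), (⟨0,0⟩), (⟨0,0⟩), (⟨0,2⟩)]

def mL3 : Matrix (Fin 6) (Fin 6) (ℤ√2) :=
  !![(⟨2,1⟩), (⟨2,0⟩), (⟨-2,1⟩), (⟨0,0⟩), (⟨0,0⟩), (⟨0,0⟩);
  (⟨0,1⟩), (⟨-2,0⟩), (⟨0,1⟩), (⟨0,2⟩), (⟨0,0⟩), (⟨0,0⟩);
  (⟨-2,1⟩), (⟨2,0⟩), (⟨2,1⟩), (⟨0,0⟩), (⟨0,0⟩), (⟨0,0⟩);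
  (⟨0,1⟩), (⟨-2,0⟩), (⟨0,1⟩), (⟨0,-2⟩), (⟨0,0⟩), (⟨0,0⟩);
  (⟨0,0⟩), (⟨0,0⟩), (⟨0,0⟩), (⟨0,0⟩), (⟨4,0⟩), (⟨0,0⟩);
  (⟨0,0⟩), (⟨0,0⟩), (⟨0,0⟩), (⟨0,0⟩), (⟨0,0⟩), (⟨4,0⟩)]

def mL4 : Matrix (Fin 6) (Fin 6) (ℤ√2) :=
  !![(⟨2,2⟩), (⟨2,0⟩), (⟨2,-2⟩), (⟨2,0⟩), (⟨0,0⟩), (⟨0,0⟩);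
  (⟨2,0⟩), (⟨-2,2⟩), (⟨2,0⟩), (⟨-2,-2⟩), (⟨0,0⟩), (⟨0,0⟩);
  (⟨2,-2⟩), (⟨2,0⟩), (⟨2,2⟩), (⟨2,0⟩), (⟨0,0⟩), (⟨0,0⟩);
  (⟨2,0⟩), (⟨-2,-2⟩), (⟨2,0⟩), (⟨-2,2⟩), (⟨0,0⟩), (⟨0,0⟩);
  (⟨0,0⟩), (⟨0,0⟩), (⟨0,0⟩), (⟨0,0⟩), (⟨0,4⟩), (⟨0,0⟩);
  (⟨0,0⟩), (⟨0,0⟩), (⟨0,0⟩), (⟨0,0⟩), (⟨0,0⟩), (⟨0,4⟩)]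

def mL5 : Matrix (Fin 6) (Fin 6) (ℤ√2) :=
  !![(⟨2,2⟩), (⟨2,0⟩), (⟨0,0⟩), (⟨2,0⟩), (⟨2,-2⟩), (⟨0,0⟩);
  (⟨2,0⟩), (⟨-2,2⟩), (⟨0,0⟩), (⟨-2,-2⟩), (⟨2,0⟩), (⟨0,0⟩);
  (⟨2,-2⟩), (⟨2,0⟩), (⟨0,0⟩), (⟨2,0⟩), (⟨2,2⟩), (⟨0,0⟩);
  (⟨2,0⟩), (⟨-2,-2⟩), (⟨0,0⟩), (⟨-2,2⟩), (⟨2,0⟩), (⟨0,0⟩);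
  (⟨0,0⟩), (⟨0,0⟩), (⟨0,4⟩), (⟨0,0⟩), (⟨0,0⟩), (⟨0,0⟩);
  (⟨0,0⟩), (⟨0,0⟩), (⟨0,0⟩), (⟨0,0⟩), (⟨0,0⟩), (⟨0,4⟩)]

def mL6 : Matrix (Fin 6) (Fin 6) (ℤ√2) :=
  !![(⟨2,2⟩), (⟨2,0⟩), (⟨0,0⟩), (⟨0,0⟩), (⟨2,-2⟩), (⟨2,0⟩);
  (⟨2,0⟩), (⟨-2,2⟩), (⟨0,0⟩), (⟨0,0⟩), (⟨2,0⟩), (⟨-2,-2⟩);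
  (⟨2,-2⟩), (⟨2,0⟩), (⟨0,0⟩), (⟨0,0⟩), (⟨2,2⟩), (⟨2,0⟩);
  (⟨2,0⟩), (⟨-2,-2⟩), (⟨0,0⟩), (⟨0,0⟩), (⟨2,0⟩), (⟨-2,2⟩);
  (⟨0,0⟩), (⟨0,0⟩), (⟨0,4⟩), (⟨0,0⟩), (⟨0,0⟩), (⟨0,0⟩);
  (⟨0,0⟩), (⟨0,0⟩), (⟨0,0⟩), (⟨0,4⟩), (⟨0,0⟩), (⟨0,0⟩)]

def mS1 : Matrix (Fin 6) (Fin 6) (ℤ√2) :=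
  !![(⟨16,8⟩), (⟨0,8⟩), (⟨-16,8⟩), (⟨0,8⟩), (⟨0,0⟩), (⟨0,0⟩);
  (⟨0,8⟩), (⟨16,-8⟩), (⟨0,8⟩), (⟨-16,-8⟩), (⟨0,0⟩), (⟨0,0⟩);
  (⟨0,0⟩), (⟨0,0⟩), (⟨16,8⟩), (⟨0,8⟩), (⟨16,-8⟩), (⟨0,-8⟩);
  (⟨0,0⟩), (⟨0,0⟩), (⟨0,8⟩), (⟨16,-8⟩), (⟨0,-8⟩), (⟨16,8⟩);
  (⟨-16,8⟩), (⟨0,8⟩), (⟨0,0⟩), (⟨0,0⟩), (⟨16,8⟩), (⟨0,8⟩);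
  (⟨0,8⟩), (⟨-16,-8⟩), (⟨0,0⟩), (⟨0,0⟩), (⟨0,8⟩), (⟨16,-8⟩)]

def mS2 : Matrix (Fin 6) (Fin 6) (ℤ√2) :=
  !![(⟨0,128⟩), (⟨0,0⟩), (⟨0,0⟩), (⟨0,0⟩), (⟨0,0⟩), (⟨0,0⟩);
  (⟨0,0⟩), (⟨0,128⟩), (⟨0,0⟩), (⟨0,0⟩), (⟨0,0⟩), (⟨0,0⟩);
  (⟨0,0⟩), (⟨0,0⟩), (⟨-64,64⟩), (⟨-64,0⟩), (⟨64,64⟩), (⟨64,0⟩);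
  (⟨0,0⟩), (⟨0,0⟩), (⟨-64,0⟩), (⟨64,64⟩), (⟨64,0⟩), (⟨-64,64⟩);
  (⟨0,0⟩), (⟨0,0⟩), (⟨64,64⟩), (⟨64,0⟩), (⟨-64,64⟩), (⟨-64,0⟩);
  (⟨0,0⟩), (⟨0,0⟩), (⟨64,0⟩), (⟨-64,64⟩), (⟨-64,0⟩), (⟨64,64⟩)]

def mR1 : Matrix (Fin 6) (Fin 6) (ℤ√2) :=
  !![(⟨2,0⟩), (⟨0,0⟩), (⟨0,0⟩), (⟨0,0⟩), (⟨0,0⟩), (⟨0,0⟩);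
  (⟨0,0⟩), (⟨2,0⟩), (⟨0,0⟩), (⟨0,0⟩), (⟨0,0⟩), (⟨0,0⟩);
  (⟨0,0⟩), (⟨0,0⟩), (⟨0,1⟩), (⟨0,0⟩), (⟨0,1⟩), (⟨0,0⟩);
  (⟨0,0⟩), (⟨0,0⟩), (⟨0,0⟩), (⟨0,1⟩), (⟨0,0⟩), (⟨0,1⟩);
  (⟨0,0⟩), (⟨0,0⟩), (⟨0,1⟩), (⟨0,0⟩), (⟨0,-1⟩), (⟨0,0⟩);
  (⟨0,0⟩), (⟨0,0⟩), (⟨0,0⟩), (⟨0,1⟩), (⟨0,0⟩), (⟨0,-1⟩)]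

def mR2 : Matrix (Fin 6) (Fin 6) (ℤ√2) :=
  !![(⟨0,2⟩), (⟨0,0⟩), (⟨0,0⟩), (⟨0,0⟩), (⟨0,0⟩), (⟨0,0⟩);
  (⟨0,0⟩), (⟨0,2⟩), (⟨0,0⟩), (⟨0,0⟩), (⟨0,0⟩), (⟨0,0⟩);
  (⟨0,0⟩), (⟨0,0⟩), (⟨2,0⟩), (⟨0,0⟩), (⟨0,1⟩), (⟨0,1⟩);
  (⟨0,0⟩), (⟨0,0⟩), (⟨0,0⟩), (⟨2,0⟩), (⟨0,1⟩), (⟨0,-1⟩);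
  (⟨0,0⟩), (⟨0,0⟩), (⟨2,0⟩), (⟨0,0⟩), (⟨0,-1⟩), (⟨0,-1⟩);
  (⟨0,0⟩), (⟨0,0⟩), (⟨0,0⟩), (⟨2,0⟩), (⟨0,-1⟩), (⟨0,1⟩)]

def mR3 : Matrix (Fin 6) (Fin 6) (ℤ√2) :=
  !![(⟨4,0⟩), (⟨0,0⟩), (⟨0,0⟩), (⟨0,0⟩), (⟨0,0⟩), (⟨0,0⟩);
  (⟨0,0⟩), (⟨4,0⟩), (⟨0,0⟩), (⟨0,0⟩), (⟨0,0⟩), (⟨0,0⟩);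
  (⟨0,0⟩), (⟨0,0⟩), (⟨2,1⟩), (⟨0,0⟩), (⟨2,-1⟩), (⟨2,0⟩);
  (⟨0,0⟩), (⟨0,0⟩), (⟨0,1⟩), (⟨0,2⟩), (⟨0,-1⟩), (⟨-2,0⟩);
  (⟨0,0⟩), (⟨0,0⟩), (⟨2,-1⟩), (⟨0,0⟩), (⟨2,1⟩), (⟨-2,0⟩);
  (⟨0,0⟩), (⟨0,0⟩), (⟨0,-1⟩), (⟨0,2⟩), (⟨0,1⟩), (⟨2,0⟩)]

def mR4 : Matrix (Fin 6) (Fin 6) (ℤ√2) :=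
  !![(⟨0,4⟩), (⟨0,0⟩), (⟨0,0⟩), (⟨0,0⟩), (⟨0,0⟩), (⟨0,0⟩);
  (⟨0,0⟩), (⟨0,4⟩), (⟨0,0⟩), (⟨0,0⟩), (⟨0,0⟩), (⟨0,0⟩);
  (⟨0,0⟩), (⟨0,0⟩), (⟨2,2⟩), (⟨2,0⟩), (⟨-2,2⟩), (⟨-2,0⟩);
  (⟨0,0⟩), (⟨0,0⟩), (⟨2,0⟩), (⟨-2,2⟩), (⟨-2,0⟩), (⟨2,2⟩);
  (⟨0,0⟩), (⟨0,0⟩), (⟨-2,2⟩), (⟨-2,0⟩), (⟨2,2⟩), (⟨2,0⟩);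
  (⟨0,0⟩), (⟨0,0⟩), (⟨-2,0⟩), (⟨2,2⟩), (⟨2,0⟩), (⟨-2,2⟩)]

def mR5 : Matrix (Fin 6) (Fin 6) (ℤ√2) :=
  !![(⟨0,4⟩), (⟨0,0⟩), (⟨0,0⟩), (⟨0,0⟩), (⟨0,0⟩), (⟨0,0⟩);
  (⟨0,0⟩), (⟨0,4⟩), (⟨0,0⟩), (⟨0,0⟩), (⟨0,0⟩), (⟨0,0⟩);
  (⟨0,0⟩), (⟨0,0⟩), (⟨-2,2⟩), (⟨2,0⟩), (⟨2,2⟩), (⟨-2,0⟩);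
  (⟨0,0⟩), (⟨0,0⟩), (⟨-2,0⟩), (⟨-2,2⟩), (⟨2,0⟩), (⟨2,2⟩);
  (⟨0,0⟩), (⟨0,0⟩), (⟨2,2⟩), (⟨-2,0⟩), (⟨-2,2⟩), (⟨2,0⟩);
  (⟨0,0⟩), (⟨0,0⟩), (⟨2,0⟩), (⟨2,2⟩), (⟨-2,0⟩), (⟨-2,2⟩)]

def mR6 : Matrix (Fin 6) (Fin 6) (ℤ√2) :=
  !![(⟨0,4⟩), (⟨0,0⟩), (⟨0,0⟩), (⟨0,0⟩), (⟨0,0⟩), (⟨0,0⟩);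
  (⟨0,0⟩), (⟨0,4⟩), (⟨0,0⟩), (⟨0,0⟩), (⟨0,0⟩), (⟨0,0⟩);
  (⟨0,0⟩), (⟨0,0⟩), (⟨-2,2⟩), (⟨-2,0⟩), (⟨2,2⟩), (⟨2,0⟩);
  (⟨0,0⟩), (⟨0,0⟩), (⟨-2,0⟩), (⟨2,2⟩), (⟨2,0⟩), (⟨-2,2⟩);
  (⟨0,0⟩), (⟨0,0⟩), (⟨2,2⟩), (⟨2,0⟩), (⟨-2,2⟩), (⟨-2,0⟩);
  (⟨0,0⟩), (⟨0,0⟩), (⟨2,0⟩), (⟨-2,2⟩), (⟨-2,0⟩), (⟨2,2⟩)]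


theorem s1 : H2 0 2 * H2 1 3 = mL1 := by decide
theorem s2 : mL1 * H2 0 1 = mL2 := by decide
theorem s3 : mL2 * H2 0 2 = mL3 := by decide
theorem s4 : mL3 * H2 1 3 = mL4 := by decide
theorem s5 : mL4 * X2 2 4 = mL5 := by decide
theorem s6 : mL5 * X2 3 5 = mL6 := by decide
theorem s7 : mL6 * mL6 = mS1 := by decide
theorem s8 : mS1 * mL6 = mS2 := by decide
theorem r1 : H2 2 4 * H2 3 5 = mR1 := by decide
theorem r2 : mR1 * H2 4 5 = mR2 := by decide
theorem r3 : mR2 * H2 2 4 = mR3 := by decide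
theorem r4 : mR3 * H2 3 5 = mR4 := by decide
theorem r5 : mR4 * X2 2 4 = mR5 := by decide
theorem r6 : mR5 * X2 3 5 = mR6 := by decide
theorem fin6 : mS2 = (32 : ℤ√2) • mR6 := by decide

theorem key :
    (H2 0 2 * H2 1 3 * H2 0 1 * H2 0 2 * H2 1 3 * X2 2 4 * X2 3 5) ^ 3 =
      (32 : ℤ√2) • (H2 2 4 * H2 3 5 * H2 4 5 * H2 2 4 * H2 3 5 * X2 2 4 * X2 3 5) := by
  rw [pow_succ, pow_succ, pow_one, s1, s2, s3, s4, s5, s6, s7, s8,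
    r1, r2, r3, r4, r5, r6, fin6]

/-- The ring hom `ℤ√2 →+* ℝ`. -/
noncomputable def φ : ℤ√2 →+* ℝ := Zsqrtd.toReal (by norm_num)

lemma φ_sqrtd : φ Zsqrtd.sqrtd = Real.sqrt 2 := by
  simp [φ, Zsqrtd.toReal_apply]

lemma H2_map (x y : Fin 6) :
    (H2 x y).map ⇑φ = Real.sqrt 2 • Hmat 6 x y := by
  have hs : Real.sqrt 2 ≠ 0 := by positivity
  ext i j
  simp only [Matrix.map_apply, H2, Hmat, Matrix.smul_apply, smul_eq_mul]
  split_ifs <;>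
    simp [φ_sqrtd, mul_one_div, div_self hs, neg_div]

lemma X2_map (x y : Fin 6) : (X2 x y).map ⇑φ = Xmat 6 x y := by
  ext i j
  simp only [Matrix.map_apply, X2, Xmat]
  split_ifs <;> simp

lemma map_smul32 (M : Matrix (Fin 6) (Fin 6) (ℤ√2)) :
    ((32 : ℤ√2) • M).map ⇑φ = (32 : ℝ) • M.map ⇑φ := by
  ext i j
  simp only [Matrix.map_apply, Matrix.smul_apply, smul_eq_mul]
  rw [_root_.map_mul, map_ofNat]

theorem key6 :
    (Hmat 6 0 2 * Hmat 6 1 3 * Hmat 6 0 1 * Hmat 6 0 2 * Hmat 6 1 3 *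
        Xmat 6 2 4 * Xmat 6 3 5) ^ 3 =
      Hmat 6 2 4 * Hmat 6 3 5 * Hmat 6 4 5 * Hmat 6 2 4 * Hmat 6 3 5 *
        Xmat 6 2 4 * Xmat 6 3 5 := by
  have hs2 : Real.sqrt 2 ^ 2 = 2 := Real.sq_sqrt (by norm_num)
  have h := congrArg (⇑(φ.mapMatrix)) key
  simp only [map_pow, _root_.map_mul, RingHom.mapMatrix_apply] at h
  rw [map_smul32] at h
  simp only [Matrix.map_mul, H2_map, X2_map] at h
  simp only [smul_mul_assoc, mul_smul_comm, smul_smul, smul_pow] at h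
  set s := Real.sqrt 2 with hsdef
  set L := Hmat 6 0 2 * Hmat 6 1 3 * Hmat 6 0 1 * Hmat 6 0 2 * Hmat 6 1 3 *
        Xmat 6 2 4 * Xmat 6 3 5 with hL
  set R := Hmat 6 2 4 * Hmat 6 3 5 * Hmat 6 4 5 * Hmat 6 2 4 * Hmat 6 3 5 *
        Xmat 6 2 4 * Xmat 6 3 5 with hR
  have hscale : ∀ c : ℝ, c ≠ 0 → ∀ A B : Matrix (Fin 6) (Fin 6) ℝ,
      c • A = c • B → A = B := fun c hc A B hcab => smul_right_injective _ hc hcab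
  have hs0 : s ≠ 0 := by rw [hsdef]; positivity
  have hne : (32:ℝ) * (s*(s*(s*(s*s)))) ≠ 0 :=
    mul_ne_zero (by norm_num)
      (mul_ne_zero hs0 (mul_ne_zero hs0 (mul_ne_zero hs0 (mul_ne_zero hs0 hs0))))
  rw [show (s*(s*(s*(s*s))))^3 = (s^2)^5 * (s*(s*(s*(s*s)))) from by ring, hs2,
      show ((2:ℝ))^5 = 32 from by norm_num] at h
  exact hscale _ hne _ _ h

section Emb

variable {n : ℕ} (g : Fin 6 ↪ Fin n)

open Classical in
/-- The equivalence splitting `Fin n` into the range of `g` and its complement. -/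
noncomputable def eg : (Fin 6) ⊕ ((Set.range ⇑g)ᶜ : Set (Fin n)) ≃ Fin n :=
  (Equiv.sumCongr (Equiv.ofInjective ⇑g g.injective) (Equiv.refl _)).trans
    (Equiv.Set.sumCompl (Set.range ⇑g))

/-- Embed a 6×6 matrix into an n×n matrix, acting as the identity off the range of `g`. -/
noncomputable def emb (M : Matrix (Fin 6) (Fin 6) ℝ) : Matrix (Fin n) (Fin n) ℝ :=
  (Matrix.fromBlocks M 0 0 1).submatrix (eg g).symm (eg g).symm

lemma emb_mul (M N : Matrix (Fin 6) (Fin 6) ℝ) :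
    emb g M * emb g N = emb g (M * N) := by
  classical
  haveI : Fintype ((Set.range ⇑g)ᶜ : Set (Fin n)) := Fintype.ofFinite _
  unfold emb
  rw [Matrix.submatrix_mul_equiv, Matrix.fromBlocks_multiply]
  simp

lemma eg_symm_g (x : Fin 6) : (eg g).symm (g x) = Sum.inl x := by
  classical
  simp only [eg, Equiv.symm_trans_apply]
  rw [Equiv.Set.sumCompl_symm_apply_of_mem (Set.mem_range_self x)]
  simp

lemma eg_symm_notMem {i : Fin n} (hi : i ∉ Set.range ⇑g) :
    ∃ h : i ∈ ((Set.range ⇑g)ᶜ : Set (Fin n)), (eg g).symm i = Sum.inr ⟨i, h⟩ := by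
  classical
  refine ⟨hi, ?_⟩
  simp only [eg, Equiv.symm_trans_apply]
  rw [Equiv.Set.sumCompl_symm_apply_of_notMem hi]
  simp

lemma emb_apply_gg (M : Matrix (Fin 6) (Fin 6) ℝ) (x y : Fin 6) :
    emb g M (g x) (g y) = M x y := by
  simp [emb, Matrix.submatrix_apply, eg_symm_g]

lemma emb_apply_right (M : Matrix (Fin 6) (Fin 6) ℝ) (x : Fin 6) {j : Fin n}
    (hj : j ∉ Set.range ⇑g) : emb g M (g x) j = 0 := by
  obtain ⟨h, hh⟩ := eg_symm_notMem g hj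
  simp [emb, Matrix.submatrix_apply, eg_symm_g, hh]

lemma emb_apply_left (M : Matrix (Fin 6) (Fin 6) ℝ) {i : Fin n}
    (hi : i ∉ Set.range ⇑g) (j : Fin n) :
    emb g M i j = if i = j then 1 else 0 := by
  obtain ⟨h, hh⟩ := eg_symm_notMem g hi
  by_cases hj : j ∈ Set.range ⇑g
  · obtain ⟨y, rfl⟩ := hj
    have : i ≠ g y := fun hE => hi (hE ▸ Set.mem_range_self y)
    simp [emb, Matrix.submatrix_apply, hh, eg_symm_g, this]
  · obtain ⟨h', hh'⟩ := eg_symm_notMem g hj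
    simp [emb, Matrix.submatrix_apply, hh, hh', Matrix.one_apply, Subtype.ext_iff]

lemma emb_Hmat (x y : Fin 6) :
    emb g (Hmat 6 x y) = Hmat n (g x) (g y) := by
  ext i j
  by_cases hi : i ∈ Set.range ⇑g
  · obtain ⟨x', rfl⟩ := hi
    by_cases hj : j ∈ Set.range ⇑g
    · obtain ⟨y', rfl⟩ := hj
      rw [emb_apply_gg]
      simp only [Hmat, g.injective.eq_iff]
    · rw [emb_apply_right g _ _ hj]
      have h1 : j ≠ g x := fun hE => hj (hE ▸ Set.mem_range_self x)
      have h2 : j ≠ g y := fun hE => hj (hE ▸ Set.mem_range_self y)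
      have h3 : g x' ≠ j := fun hE => hj (hE ▸ Set.mem_range_self x')
      simp [Hmat, h1, h2, h3]
  · rw [emb_apply_left g _ hi]
    have h1 : i ≠ g x := fun hE => hi (hE ▸ Set.mem_range_self x)
    have h2 : i ≠ g y := fun hE => hi (hE ▸ Set.mem_range_self y)
    simp [Hmat, h1, h2]

lemma emb_Xmat (x y : Fin 6) :
    emb g (Xmat 6 x y) = Xmat n (g x) (g y) := by
  ext i j
  by_cases hi : i ∈ Set.range ⇑g
  · obtain ⟨x', rfl⟩ := hi
    by_cases hj : j ∈ Set.range ⇑g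
    · obtain ⟨y', rfl⟩ := hj
      rw [emb_apply_gg]
      simp only [Xmat]
      rw [g.injective.swap_apply]
      simp [g.injective.eq_iff]
    · rw [emb_apply_right g _ _ hj]
      simp only [Xmat]
      rw [g.injective.swap_apply]
      have h3 : j ≠ g (Equiv.swap x y x') := fun hE => hj (hE ▸ Set.mem_range_self _)
      simp [h3]
  · rw [emb_apply_left g _ hi]
    have h1 : i ≠ g x := fun hE => hi (hE ▸ Set.mem_range_self x)
    have h2 : i ≠ g y := fun hE => hi (hE ▸ Set.mem_range_self y)
    simp only [Xmat]
    rw [Equiv.swap_apply_of_ne_of_ne h1 h2]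
    simp [eq_comm]

end Emb

end D4Aux


theorem d4_matrix (n : ℕ) (hn : 1 ≤ n) (a b c d e f : Fin n)
    (hab : a ≠ b) (hac : a ≠ c) (had : a ≠ d) (hae : a ≠ e) (haf : a ≠ f)
    (hbc : b ≠ c) (hbd : b ≠ d) (hbe : b ≠ e) (hbf : b ≠ f)
    (hcd : c ≠ d) (hce : c ≠ e) (hcf : c ≠ f)
    (hde : d ≠ e) (hdf : d ≠ f) (hef : e ≠ f) :
    (Hmat n a c * Hmat n b d * Hmat n a b * Hmat n a c * Hmat n b d *
        Xmat n c e * Xmat n d f) ^ 3 =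
      Hmat n c e * Hmat n d f * Hmat n e f * Hmat n c e * Hmat n d f *
        Xmat n c e * Xmat n d f := by
  have hg : Function.Injective ![a, b, c, d, e, f] := by
    intro i j hij
    fin_cases i <;> fin_cases j <;>
      simp only [Matrix.cons_val_zero, Matrix.cons_val_one, Matrix.head_cons,
        Matrix.cons_val_two, Matrix.tail_cons, Matrix.cons_val_three,
        Matrix.cons_val_four, Matrix.cons_val_fin_one, Fin.mk_one,
        Fin.isValue] at hij ⊢ <;>
      first
        | rfl
        | (exact absurd hij (by tauto))
        | (exact absurd hij.symm (by tauto))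
  let g : Fin 6 ↪ Fin n := ⟨![a, b, c, d, e, f], hg⟩
  have ha : a = g 0 := rfl
  have hb : b = g 1 := rfl
  have hc : c = g 2 := rfl
  have hd : d = g 3 := rfl
  have he : e = g 4 := rfl
  have hf : f = g 5 := rfl
  rw [ha, hb, hc, hd, he, hf]
  rw [← D4Aux.emb_Hmat g 0 2, ← D4Aux.emb_Hmat g 1 3, ← D4Aux.emb_Hmat g 0 1,
      ← D4Aux.emb_Hmat g 2 4, ← D4Aux.emb_Hmat g 3 5, ← D4Aux.emb_Hmat g 4 5,
      ← D4Aux.emb_Xmat g 2 4, ← D4Aux.emb_Xmat g 3 5]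
  simp only [D4Aux.emb_mul]
  rw [pow_succ, pow_succ, pow_one]
  simp only [D4Aux.emb_mul]
  have h6 := D4Aux.key6
  rw [pow_succ, pow_succ, pow_one] at h6
  exact congrArg (D4Aux.emb g) h6
end
end

section
/- Let n ≥ 1 and let a, b, c, d ∈ {1,…,n} be pairwise distinct. Then, as words over 𝒢_n, (H_{a,b} H_{c,d} H_{a,c} H_{b,d})² ≈ ε. -/
open Matrix

noncomputable section

theorem WRel.mul' {n : ℕ} {u v u' v' : List (Gen n)} (h : WRel n u v) (h' : WRel n u' v') :
    WRel n (u ++ u') (v ++ v') :=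
  (h.append_right u').trans (WRel.append_left v h')

theorem WRel.ctx {n : ℕ} (x y : List (Gen n)) {u v : List (Gen n)} (h : WRel n u v) :
    WRel n (x ++ (u ++ y)) (x ++ (v ++ y)) :=
  WRel.append_left x (h.append_right y)

theorem rel_f1 (n : ℕ) (hn : 1 ≤ n) (a b c d : Fin n)
    (hab : a ≠ b) (hac : a ≠ c) (had : a ≠ d)
    (hbc : b ≠ c) (hbd : b ≠ d) (hcd : c ≠ d) :
    WRel n
      ([Gen.H a b hab, Gen.H c d hcd, Gen.H a c hac, Gen.H b d hbd] ++
       [Gen.H a b hab, Gen.H c d hcd, Gen.H a c hac, Gen.H b d hbd])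
      [] := by
  have F1 : WRel n [Gen.H c d hcd, Gen.H a c hac, Gen.H b d hbd, Gen.H b d hbd, Gen.H a c hac, Gen.H c d hcd] [] := by
    refine WRel.trans (WRel.ctx [Gen.H c d hcd, Gen.H a c hac] [Gen.H a c hac, Gen.H c d hcd] (WRel.rel_hh b d hbd)) ?_
    refine WRel.trans (WRel.ctx [Gen.H c d hcd] [Gen.H c d hcd] (WRel.rel_hh a c hac)) ?_
    exact WRel.rel_hh c d hcd
  have comPQ : WRel n [Gen.H a c hac, Gen.H b d hbd] [Gen.H b d hbd, Gen.H a c hac] :=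
    WRel.rel_hh_comm a c b d hac hab had hbc.symm hcd hbd
  have comCA : WRel n [Gen.H c d hcd, Gen.H a b hab] [Gen.H a b hab, Gen.H c d hcd] :=
    WRel.rel_hh_comm c d a b hcd hac.symm hbc.symm had.symm hbd.symm hab
  have F3 : WRel n [Gen.H c d hcd, Gen.H c d hcd, Gen.H a c hac, Gen.H b d hbd] [Gen.H b d hbd, Gen.H a c hac, Gen.H c d hcd, Gen.H c d hcd] := by
    refine WRel.trans (WRel.ctx [] [Gen.H a c hac, Gen.H b d hbd] (WRel.rel_hh c d hcd)) ?_
    refine WRel.trans comPQ ?_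
    exact WRel.ctx [Gen.H b d hbd, Gen.H a c hac] [] (WRel.rel_hh c d hcd).symm
  have d3 := WRel.rel_d3 a b c d hab hac had hbc hbd hcd
  refine WRel.trans (WRel.ctx [] [Gen.H a c hac, Gen.H b d hbd, Gen.H a b hab, Gen.H c d hcd, Gen.H a c hac, Gen.H b d hbd] d3.symm) ?_
  refine WRel.trans (WRel.ctx [Gen.H c d hcd, Gen.H a c hac, Gen.H b d hbd, Gen.H c d hcd, Gen.H a c hac, Gen.H b d hbd, Gen.H c d hcd, Gen.H a c hac, Gen.H b d hbd, Gen.H c d hcd, Gen.H a c hac, Gen.H b d hbd]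
    [Gen.H a c hac, Gen.H b d hbd, Gen.H a b hab, Gen.H c d hcd, Gen.H a c hac, Gen.H b d hbd] (WRel.rel_hh c d hcd).symm) ?_
  refine WRel.trans (WRel.ctx [Gen.H c d hcd, Gen.H a c hac, Gen.H b d hbd, Gen.H c d hcd, Gen.H a c hac, Gen.H b d hbd, Gen.H c d hcd, Gen.H a c hac, Gen.H b d hbd, Gen.H c d hcd, Gen.H a c hac, Gen.H b d hbd]
    [Gen.H a b hab, Gen.H c d hcd, Gen.H a c hac, Gen.H b d hbd] F3) ?_
  refine WRel.trans (WRel.ctx [Gen.H c d hcd, Gen.H a c hac, Gen.H b d hbd, Gen.H c d hcd, Gen.H a c hac, Gen.H b d hbd, Gen.H c d hcd, Gen.H a c hac, Gen.H b d hbd]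
    [Gen.H c d hcd, Gen.H a b hab, Gen.H c d hcd, Gen.H a c hac, Gen.H b d hbd] F1) ?_
  refine WRel.trans (WRel.ctx [Gen.H c d hcd, Gen.H a c hac, Gen.H b d hbd, Gen.H c d hcd, Gen.H a c hac, Gen.H b d hbd, Gen.H c d hcd, Gen.H a c hac, Gen.H b d hbd]
    [Gen.H c d hcd, Gen.H a c hac, Gen.H b d hbd] comCA) ?_
  refine WRel.trans (WRel.ctx [Gen.H c d hcd, Gen.H a c hac, Gen.H b d hbd, Gen.H c d hcd, Gen.H a c hac, Gen.H b d hbd, Gen.H c d hcd, Gen.H a c hac, Gen.H b d hbd]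
    [Gen.H c d hcd, Gen.H a c hac, Gen.H b d hbd] d3.symm) ?_
  refine WRel.trans (WRel.ctx []
    [Gen.H c d hcd, Gen.H a c hac, Gen.H b d hbd, Gen.H c d hcd, Gen.H a c hac, Gen.H b d hbd, Gen.H c d hcd, Gen.H a c hac, Gen.H b d hbd, Gen.H c d hcd, Gen.H a c hac, Gen.H b d hbd] d3) ?_
  refine WRel.trans (WRel.ctx [Gen.H a b hab, Gen.H c d hcd] [] d3) ?_
  refine WRel.trans (WRel.ctx [Gen.H a b hab] [Gen.H c d hcd] comCA) ?_
  refine WRel.trans (WRel.ctx [] [Gen.H c d hcd, Gen.H c d hcd] (WRel.rel_hh a b hab)) ?_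
  exact WRel.rel_hh c d hcd
end
end

section
/- Let n ≥ 1 and let a, b, c ∈ {1,…,n} be pairwise distinct. Then, as words over 𝒢_n, H_{c,b} X_{a,b} ≈ X_{a,b} H_{c,a} and H_{c,a} X_{b,c} ≈ X_{b,c} H_{b,a}. -/
open Matrix

noncomputable section

theorem rel_c4c5_reversed (n : ℕ) (hn : 1 ≤ n) (a b c : Fin n)
    (hab : a ≠ b) (hac : a ≠ c) (hbc : b ≠ c) :
    WRel n [Gen.H c b (Ne.symm hbc), Gen.X a b hab]
        [Gen.X a b hab, Gen.H c a (Ne.symm hac)] ∧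
    WRel n [Gen.H c a (Ne.symm hac), Gen.X b c hbc]
        [Gen.X b c hbc, Gen.H b a (Ne.symm hab)] := by
  have cg : ∀ (w1 w2 u v : List (Gen n)), WRel n u v →
      WRel n (w1 ++ (u ++ w2)) (w1 ++ (v ++ w2)) :=
    fun w1 w2 _ _ h => WRel.append_left w1 (WRel.append_right w2 h)
  constructor
  · refine WRel.trans (cg [] [Gen.X a b hab] _ _ (WRel.rel_h_swap b c hbc)) ?_
    refine WRel.trans (cg [Gen.X b c hbc, Gen.H b c hbc] [] _ _
      (WRel.rel_xc2 a b c hab hac hbc)) ?_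
    refine WRel.trans (cg [Gen.X b c hbc] [Gen.X a c hac] _ _
      (WRel.rel_hx4 a b c hab hac hbc)) ?_
    refine WRel.trans (cg [] [Gen.H a c hac, Gen.X a c hac] _ _
      (WRel.rel_xc2 a b c hab hac hbc)) ?_
    exact cg [Gen.X a b hab] [] _ _ (WRel.symm (WRel.rel_h_swap a c hac))
  · refine WRel.trans (cg [] [Gen.X b c hbc] _ _ (WRel.rel_h_swap a c hac)) ?_
    refine WRel.trans (cg [Gen.X a c hac, Gen.H a c hac] [] _ _
      (WRel.rel_xc3 a b c hab hac hbc)) ?_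
    refine WRel.trans (cg [Gen.X a c hac] [Gen.X a b hab] _ _
      (WRel.rel_hx5 a b c hab hac hbc)) ?_
    refine WRel.trans (cg [] [Gen.H a b hab, Gen.X a b hab] _ _
      (WRel.rel_xc3 a b c hab hac hbc)) ?_
    exact cg [Gen.X b c hbc] [] _ _ (WRel.symm (WRel.rel_h_swap a b hab))
end
end

section
/- Let v ∈ ℤ[1/√2]⁴ and let k ≥ 2 be such that √2^k·v has all entries in ℤ[√2] and either all four entries of √2^k·v are ≡ 1 (mod 2) or all four entries are ≡ 1+√2 (mod 2). Then √2^{k−1}·H_{1,3}H_{2,4}H_{1,2}H_{3,4}·v has all entries in ℤ[√2], or √2^{k−1}·H_{1,4}H_{2,3}H_{1,2}H_{3,4}·v has all entries in ℤ[√2]. -/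
open Matrix

noncomputable section

section LdeAux

lemma aux_h2 : Real.sqrt 2 * Real.sqrt 2 = 2 := Real.mul_self_sqrt (by norm_num)
lemma aux_hs0 : Real.sqrt 2 ≠ 0 := by positivity

lemma aux_HmV (b c : Fin 4) (u : Fin 4 → ℝ) (hbc : b ≠ c) :
    (Hmat 4 b c).mulVec u = fun i =>
      if i = b then (u b + u c)/Real.sqrt 2
      else if i = c then (u b - u c)/Real.sqrt 2 else u i := by
  funext i
  simp only [Matrix.mulVec, dotProduct, Hmat, Fin.sum_univ_four]
  fin_cases b <;> fin_cases c <;> fin_cases i <;> simp_all <;> ring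

lemma aux_mulVecL (u : Fin 4 → ℝ) :
    (Hmat 4 0 2 * Hmat 4 1 3 * Hmat 4 0 1 * Hmat 4 2 3).mulVec u =
    ![(u 0+u 1+u 2+u 3)/2, (u 0-u 1+u 2-u 3)/2, (u 0+u 1-u 2-u 3)/2, (u 0-u 1-u 2+u 3)/2] := by
  rw [← Matrix.mulVec_mulVec, ← Matrix.mulVec_mulVec, ← Matrix.mulVec_mulVec,
    aux_HmV _ _ _ (by decide), aux_HmV _ _ _ (by decide), aux_HmV _ _ _ (by decide),
    aux_HmV _ _ _ (by decide)]
  funext i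
  fin_cases i <;> simp <;> field_simp <;> simp only [Real.sq_sqrt (show (0:ℝ) ≤ 2 by norm_num)] <;> ring

lemma aux_mulVecR (u : Fin 4 → ℝ) :
    (Hmat 4 0 3 * Hmat 4 1 2 * Hmat 4 0 1 * Hmat 4 2 3).mulVec u =
    ![(u 0+u 1+u 2-u 3)/2, (u 0-u 1+u 2+u 3)/2, (u 0-u 1-u 2-u 3)/2, (u 0+u 1-u 2+u 3)/2] := by
  rw [← Matrix.mulVec_mulVec, ← Matrix.mulVec_mulVec, ← Matrix.mulVec_mulVec,
    aux_HmV _ _ _ (by decide), aux_HmV _ _ _ (by decide), aux_HmV _ _ _ (by decide),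
    aux_HmV _ _ _ (by decide)]
  funext i
  fin_cases i <;> simp <;> field_simp <;> simp only [Real.sq_sqrt (show (0:ℝ) ≤ 2 by norm_num)] <;> ring

lemma aux_key (k : ℕ) (hk : 1 ≤ k) (y : ℝ) (A B : ℤ)
    (hx : Real.sqrt 2 ^ k * (2 * y) = 4*A + 2*B*Real.sqrt 2) :
    inZsqrt2 (Real.sqrt 2 ^ (k-1) * y) := by
  refine ⟨B, A, ?_⟩
  apply mul_left_cancel₀ aux_hs0
  have hp : Real.sqrt 2 * Real.sqrt 2 ^ (k-1) = Real.sqrt 2 ^ k := by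
    rw [← pow_succ']
    congr 1
    omega
  have : Real.sqrt 2 * (Real.sqrt 2 ^ (k-1) * y)
      = Real.sqrt 2 ^ k * (2*y) / 2 := by
    rw [← hp]; ring
  rw [this, hx]
  have h2' : Real.sqrt 2 ^ 2 = 2 := Real.sq_sqrt (by norm_num)
  linear_combination (-(A:ℝ)) * h2'

end LdeAux

theorem lde_reduction_uniform (v : Fin 4 → ℝ) (hv : ∀ i, inZinvsqrt2 (v i))
    (k : ℕ) (hk : 2 ≤ k) (hvk : ∀ i, inZsqrt2 (Real.sqrt 2 ^ k * v i))
    (hmod : (∀ i, cong2 (Real.sqrt 2 ^ k * v i) 1) ∨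
      (∀ i, cong2 (Real.sqrt 2 ^ k * v i) (1 + Real.sqrt 2))) :
    (∀ i, inZsqrt2 (Real.sqrt 2 ^ (k - 1) *
        ((Hmat 4 0 2 * Hmat 4 1 3 * Hmat 4 0 1 * Hmat 4 2 3).mulVec v) i)) ∨
    (∀ i, inZsqrt2 (Real.sqrt 2 ^ (k - 1) *
        ((Hmat 4 0 3 * Hmat 4 1 2 * Hmat 4 0 1 * Hmat 4 2 3).mulVec v) i)) := by

  obtain ⟨β, p, q, hw⟩ :
      ∃ (β : ℤ) (p q : Fin 4 → ℤ), ∀ i,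
        Real.sqrt 2 ^ k * v i = (2*p i + 1) + (2*q i + β) * Real.sqrt 2 := by
    rcases hmod with h | h
    · simp only [cong2, inZsqrt2] at h
      choose p q hpq using h
      refine ⟨0, p, q, fun i => ?_⟩
      have := hpq i
      push_cast
      linear_combination 2 * this
    · simp only [cong2, inZsqrt2] at h
      choose p q hpq using h
      refine ⟨1, p, q, fun i => ?_⟩
      have := hpq i
      push_cast
      linear_combination 2 * this
  rcases Int.even_or_odd (p 0 + p 1 + p 2 + p 3) with ⟨E, hE⟩ | ⟨E, hE⟩
  · left
    have hE' : ((p 0 : ℝ) + p 1 + p 2 + p 3) = E + E := by exact_mod_cast hE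
    intro i
    rw [aux_mulVecL]
    fin_cases i
    · show inZsqrt2 (Real.sqrt 2 ^ (k-1) * ((v 0 + v 1 + v 2 + v 3)/2))
      refine aux_key k (by omega) _ (E+1) (q 0 + q 1 + q 2 + q 3 + 2*β) ?_
      push_cast
      linear_combination hw 0 + hw 1 + hw 2 + hw 3 + 2*hE'
    · show inZsqrt2 (Real.sqrt 2 ^ (k-1) * ((v 0 - v 1 + v 2 - v 3)/2))
      refine aux_key k (by omega) _ (E - p 1 - p 3) (q 0 - q 1 + q 2 - q 3) ?_
      push_cast
      linear_combination hw 0 - hw 1 + hw 2 - hw 3 + 2*hE'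
    · show inZsqrt2 (Real.sqrt 2 ^ (k-1) * ((v 0 + v 1 - v 2 - v 3)/2))
      refine aux_key k (by omega) _ (E - p 2 - p 3) (q 0 + q 1 - q 2 - q 3) ?_
      push_cast
      linear_combination hw 0 + hw 1 - hw 2 - hw 3 + 2*hE'
    · show inZsqrt2 (Real.sqrt 2 ^ (k-1) * ((v 0 - v 1 - v 2 + v 3)/2))
      refine aux_key k (by omega) _ (E - p 1 - p 2) (q 0 - q 1 - q 2 + q 3) ?_
      push_cast
      linear_combination hw 0 - hw 1 - hw 2 + hw 3 + 2*hE'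
  · right
    have hE' : ((p 0 : ℝ) + p 1 + p 2 + p 3) = 2*E + 1 := by exact_mod_cast hE
    intro i
    rw [aux_mulVecR]
    fin_cases i
    · show inZsqrt2 (Real.sqrt 2 ^ (k-1) * ((v 0 + v 1 + v 2 - v 3)/2))
      refine aux_key k (by omega) _ (E + 1 - p 3) (q 0 + q 1 + q 2 - q 3 + β) ?_
      push_cast
      linear_combination hw 0 + hw 1 + hw 2 - hw 3 + 2*hE'
    · show inZsqrt2 (Real.sqrt 2 ^ (k-1) * ((v 0 - v 1 + v 2 + v 3)/2))
      refine aux_key k (by omega) _ (E + 1 - p 1) (q 0 - q 1 + q 2 + q 3 + β) ?_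
      push_cast
      linear_combination hw 0 - hw 1 + hw 2 + hw 3 + 2*hE'
    · show inZsqrt2 (Real.sqrt 2 ^ (k-1) * ((v 0 - v 1 - v 2 - v 3)/2))
      refine aux_key k (by omega) _ (E - p 1 - p 2 - p 3) (q 0 - q 1 - q 2 - q 3 - β) ?_
      push_cast
      linear_combination hw 0 - hw 1 - hw 2 - hw 3 + 2*hE'
    · show inZsqrt2 (Real.sqrt 2 ^ (k-1) * ((v 0 + v 1 - v 2 + v 3)/2))
      refine aux_key k (by omega) _ (E + 1 - p 2) (q 0 + q 1 - q 2 + q 3 + β) ?_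
      push_cast
      linear_combination hw 0 + hw 1 - hw 2 + hw 3 + 2*hE'
end
end

section
/- Let n ≥ 1 and let s, r ∈ O_n(ℤ[1/√2]) with level(s) = level(r) = (j, k, l) where k ≥ 1. Let 1 ≤ a, b, c, d ≤ j be pairwise distinct indices such that lde(s_{a,j}) = lde(s_{b,j}) = k, lde(s_{c,j}) ≤ k−1, lde(s_{d,j}) ≤ k−1, r = H_{a,c}·H_{b,d}·H_{a,b}·H_{b,d}·H_{a,c}·s, and √2^k·s_{a,j} ≢ √2^k·s_{b,j} (mod 2). Then either (lde(r_{a,j}) = lde(r_{b,j}) = k, lde(r_{c,j}) ≤ k−1 and lde(r_{d,j}) ≤ k−1), or (lde(r_{c,j}) = lde(r_{d,j}) = k, lde(r_{a,j}) ≤ k−1 and lde(r_{b,j}) ≤ k−1). -/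
open Matrix

noncomputable section

section Helpers

local notation "α" => Real.sqrt 2

lemma alpha_pos : (0:ℝ) < α := Real.sqrt_pos.mpr (by norm_num)
lemma alpha_ne : (α:ℝ) ≠ 0 := ne_of_gt alpha_pos
lemma alpha_sq : α * α = 2 := Real.mul_self_sqrt (by norm_num)

lemma zsqrt2_uniq {p q p' q' : ℤ} (h : (p:ℝ) + q * α = p' + q' * α) :
    p = p' ∧ q = q' := by
  by_cases hq : q = q'
  · subst hq
    have : (p:ℝ) = p' := by linarith
    exact ⟨by exact_mod_cast this, rfl⟩
  · exfalso
    have hne : ((q':ℝ) - q) ≠ 0 := by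
      intro h0
      apply hq
      have : (q:ℝ) = q' := by linarith
      exact_mod_cast this
    have h1 : α = ((p - p' : ℤ) : ℝ) / ((q' - q : ℤ) : ℝ) := by
      push_cast
      field_simp
      linarith
    have h2 : α = (((p - p' : ℤ) / (q' - q : ℤ) : ℚ) : ℝ) := by
      rw [h1]; push_cast [Rat.cast_div]; norm_num
    exact irrational_sqrt_two ⟨_, h2.symm⟩

lemma inZ_alpha_mul {x : ℝ} (hx : inZsqrt2 x) : inZsqrt2 (α * x) := by
  obtain ⟨a, b, rfl⟩ := hx
  exact ⟨2 * b, a, by push_cast; linear_combination (b:ℝ) * alpha_sq⟩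

lemma inZ_div_alpha (p q : ℤ) : inZsqrt2 (((p:ℝ) + q * α) / α) ↔ 2 ∣ p := by
  constructor
  · rintro ⟨c, d, hcd⟩
    have h1 : (p:ℝ) + q * α = c * α + 2 * d := by
      field_simp at hcd
      linear_combination hcd + (d:ℝ) * alpha_sq
    have h2 : (p:ℝ) + q * α = ((2*d : ℤ):ℝ) + ((c:ℤ):ℝ) * α := by push_cast; linarith
    exact ⟨d, (zsqrt2_uniq h2).1⟩
  · rintro ⟨m, rfl⟩
    refine ⟨q, m, ?_⟩
    field_simp
    push_cast
    linear_combination (-(m:ℝ)) * alpha_sq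

lemma inZ_up {x : ℝ} {m : ℕ} (h : inZsqrt2 (α ^ m * x)) :
    inZsqrt2 (α ^ (m + 1) * x) := by
  have he : α ^ (m+1) * x = α * (α ^ m * x) := by ring
  rw [he]; exact inZ_alpha_mul h

lemma inZ_mono {x : ℝ} {m m' : ℕ} (hmm : m ≤ m') (h : inZsqrt2 (α ^ m * x)) :
    inZsqrt2 (α ^ m' * x) := by
  induction m' with
  | zero => simpa [Nat.le_zero.mp hmm] using h
  | succ k ih =>
    rcases Nat.lt_or_ge m (k+1) with h1 | h1
    · exact inZ_up (ih (Nat.lt_succ_iff.mp h1))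
    · have : m = k + 1 := le_antisymm hmm h1
      subst this; exact h

lemma lde_le {x : ℝ} {m : ℕ} (h : inZsqrt2 (α ^ m * x)) : lde x ≤ m :=
  Nat.sInf_le h

lemma lde_mem {x : ℝ} (h : inZinvsqrt2 x) : inZsqrt2 (α ^ (lde x) * x) :=
  Nat.sInf_mem h

lemma lde_le_iff {x : ℝ} (h : inZinvsqrt2 x) {m : ℕ} :
    lde x ≤ m ↔ inZsqrt2 (α ^ m * x) :=
  ⟨fun hm => inZ_mono hm (lde_mem h), lde_le⟩

lemma ldeVec_mem {m : ℕ} {v : Fin m → ℝ} (h : ∀ i, inZinvsqrt2 (v i)) (i : Fin m) :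
    inZsqrt2 (α ^ (ldeVec v) * v i) := by
  have hne : {k : ℕ | ∀ i, inZsqrt2 (Real.sqrt 2 ^ k * v i)}.Nonempty := by
    refine ⟨Finset.univ.sup (fun i => lde (v i)), fun i => ?_⟩
    exact inZ_mono (Finset.le_sup (Finset.mem_univ i)) (lde_mem (h i))
  exact Nat.sInf_mem hne i

lemma level_eq' {n : ℕ} {M : Matrix (Fin n) (Fin n) ℝ} {j k l : ℕ} (hk : 1 ≤ k)
    (h : level M = toLex (j, toLex (k, l))) :
    levelJ M = j ∧ ldeVec (levelCol M) = k := by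
  unfold level at h
  split_ifs at h with h1 h2
  · rw [toLex_inj, Prod.mk.injEq, toLex_inj, Prod.mk.injEq] at h
    omega
  · rw [toLex_inj, Prod.mk.injEq, toLex_inj, Prod.mk.injEq] at h
    omega
  · rw [toLex_inj, Prod.mk.injEq, toLex_inj, Prod.mk.injEq] at h
    exact ⟨h.1, h.2.1⟩

/-- Key characterization: if `α^k x = P + Q α`, then oddness of `P` decides `lde x`. -/
lemma lde_char {x : ℝ} (hinv : inZinvsqrt2 x) {k : ℕ} (hk : 1 ≤ k) {P Q : ℤ}
    (hx : α ^ k * x = (P:ℝ) + (Q:ℝ) * α) :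
    (¬ (2 ∣ P) → lde x = k) ∧ ((2 ∣ P) → lde x ≤ k - 1) := by
  have hps : α ^ k = α ^ (k-1) * α := by
    rw [← pow_succ]; congr 1; omega
  have hdiv : α ^ (k-1) * x = ((P:ℝ) + (Q:ℝ) * α) / α := by
    rw [eq_div_iff alpha_ne, ← hx, hps]; ring
  constructor
  · intro hodd
    refine le_antisymm (lde_le (hx ▸ ⟨P, Q, rfl⟩)) ?_
    by_contra hlt
    have h1 : lde x ≤ k - 1 := by omega
    have h2 : inZsqrt2 (α ^ (k-1) * x) := (lde_le_iff hinv).mp h1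
    rw [hdiv] at h2
    exact hodd ((inZ_div_alpha P Q).mp h2)
  · intro heven
    exact lde_le (by rw [hdiv]; exact (inZ_div_alpha P Q).mpr heven)

lemma Hmat_xx {n : ℕ} (x y : Fin n) : Hmat n x y x x = 1/α := by
  unfold Hmat; rw [if_pos ⟨rfl, rfl⟩]

lemma Hmat_xy {n : ℕ} (x y : Fin n) (hxy : x ≠ y) : Hmat n x y x y = 1/α := by
  unfold Hmat
  rw [if_neg (by rintro ⟨-, h⟩; exact hxy h.symm), if_pos ⟨rfl, rfl⟩]

lemma Hmat_yx {n : ℕ} (x y : Fin n) (hxy : x ≠ y) : Hmat n x y y x = 1/α := by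
  unfold Hmat
  rw [if_neg (by rintro ⟨h, -⟩; exact hxy h.symm),
    if_neg (by rintro ⟨h, -⟩; exact hxy h.symm), if_pos ⟨rfl, rfl⟩]

lemma Hmat_yy {n : ℕ} (x y : Fin n) (hxy : x ≠ y) : Hmat n x y y y = -(1/α) := by
  unfold Hmat
  rw [if_neg (by rintro ⟨h, -⟩; exact hxy h.symm),
    if_neg (by rintro ⟨h, -⟩; exact hxy h.symm),
    if_neg (by rintro ⟨-, h⟩; exact hxy h.symm), if_pos ⟨rfl, rfl⟩]

lemma Hmat_col_ne {n : ℕ} (x y : Fin n) (i m : Fin n) (hmx : m ≠ x) (hmy : m ≠ y) :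
    Hmat n x y i m = if i = m then 1 else 0 := by
  unfold Hmat
  rw [if_neg (by rintro ⟨-, h⟩; exact hmx h), if_neg (by rintro ⟨-, h⟩; exact hmy h),
    if_neg (by rintro ⟨-, h⟩; exact hmx h), if_neg (by rintro ⟨-, h⟩; exact hmy h)]

lemma Hmat_row_ne {n : ℕ} (x y : Fin n) (i m : Fin n) (hix : i ≠ x) (hiy : i ≠ y)
    (him : i ≠ m) : Hmat n x y i m = 0 := by
  unfold Hmat
  rw [if_neg (by rintro ⟨h, -⟩; exact hix h), if_neg (by rintro ⟨h, -⟩; exact hix h),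
    if_neg (by rintro ⟨h, -⟩; exact hiy h), if_neg (by rintro ⟨h, -⟩; exact hiy h),
    if_neg him]

lemma Hmul {n : ℕ} (x y : Fin n) (hxy : x ≠ y) (M : Matrix (Fin n) (Fin n) ℝ)
    (i jj : Fin n) :
    (Hmat n x y * M) i jj =
      if i = x then (M x jj + M y jj) / α
      else if i = y then (M x jj - M y jj) / α
      else M i jj := by
  rw [Matrix.mul_apply]
  by_cases hix : i = x
  · rw [if_pos hix]
    rw [← Finset.sum_subset (Finset.subset_univ ({x, y} : Finset (Fin n)))
      (fun m _ hm => ?_)]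
    · rw [Finset.sum_insert (by simp [hxy]), Finset.sum_singleton, hix,
        Hmat_xx, Hmat_xy x y hxy]
      field_simp
    · simp only [Finset.mem_insert, Finset.mem_singleton, not_or] at hm
      rw [Hmat_col_ne x y i m hm.1 hm.2,
        if_neg (show ¬ i = m from fun h => hm.1 (by rw [← h, hix])), zero_mul]
  · by_cases hiy : i = y
    · rw [if_neg hix, if_pos hiy]
      rw [← Finset.sum_subset (Finset.subset_univ ({x, y} : Finset (Fin n)))
        (fun m _ hm => ?_)]
      · rw [Finset.sum_insert (by simp [hxy]), Finset.sum_singleton, hiy,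
          Hmat_yx x y hxy, Hmat_yy x y hxy]
        field_simp
        ring
      · simp only [Finset.mem_insert, Finset.mem_singleton, not_or] at hm
        rw [Hmat_col_ne x y i m hm.1 hm.2,
          if_neg (show ¬ i = m from fun h => hm.2 (by rw [← h, hiy])), zero_mul]
    · rw [if_neg hix, if_neg hiy]
      rw [Finset.sum_eq_single i (fun m _ hm => ?_) (by simp)]
      · rw [Hmat_col_ne x y i i (hix) (hiy), if_pos rfl, one_mul]
      · rw [Hmat_row_ne x y i m hix hiy (fun h => hm h.symm), zero_mul]

end Helpers


set_option maxHeartbeats 1000000 in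
theorem useful3 (n : ℕ) (hn : 1 ≤ n) (s r : Matrix (Fin n) (Fin n) ℝ)
    (hso : s * sᵀ = 1) (hse : ∀ i j, inZinvsqrt2 (s i j))
    (hro : r * rᵀ = 1) (hre : ∀ i j, inZinvsqrt2 (r i j))
    (j k l : ℕ) (hk : 1 ≤ k)
    (hls : level s = toLex (j, toLex (k, l))) (hlr : level r = toLex (j, toLex (k, l)))
    (a b c d : Fin n)
    (hab : a ≠ b) (hac : a ≠ c) (had : a ≠ d)
    (hbc : b ≠ c) (hbd : b ≠ d) (hcd : c ≠ d)
    (haj : (a : ℕ) + 1 ≤ j) (hbj : (b : ℕ) + 1 ≤ j)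
    (hcj : (c : ℕ) + 1 ≤ j) (hdj : (d : ℕ) + 1 ≤ j)
    (hldea : lde (levelCol s a) = k) (hldeb : lde (levelCol s b) = k)
    (hldec : lde (levelCol s c) ≤ k - 1) (hlded : lde (levelCol s d) ≤ k - 1)
    (hr : r = Hmat n a c * Hmat n b d * Hmat n a b * Hmat n b d * Hmat n a c * s)
    (hmod : ¬ cong2 (Real.sqrt 2 ^ k * levelCol s a) (Real.sqrt 2 ^ k * levelCol s b)) :
    (lde (levelCol r a) = k ∧ lde (levelCol r b) = k ∧
      lde (levelCol r c) ≤ k - 1 ∧ lde (levelCol r d) ≤ k - 1) ∨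
    (lde (levelCol r c) = k ∧ lde (levelCol r d) = k ∧
      lde (levelCol r a) ≤ k - 1 ∧ lde (levelCol r b) ≤ k - 1) := by
  classical
  obtain ⟨hJs, hKs⟩ := level_eq' hk hls
  obtain ⟨hJr, hKr⟩ := level_eq' hk hlr
  have hba : b ≠ a := hab.symm
  have hca : c ≠ a := hac.symm
  have hda : d ≠ a := had.symm
  have hcb : c ≠ b := hbc.symm
  have hdb : d ≠ b := hbd.symm
  have hdc : d ≠ c := hcd.symm
  have hj1 : 1 ≤ j := by omega
  have hjn : j ≤ n := by
    rw [← hJs]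
    unfold levelJ
    refine csSup_le' ?_
    rintro m ⟨i, rfl, -⟩
    have := i.isLt
    omega
  have hcol : j - 1 < n := by omega
  set col : Fin n := ⟨j - 1, hcol⟩ with hcoldef
  have hcolS : ∀ i, levelCol s i = s i col := by
    intro i
    simp only [levelCol, hJs]
    rw [dif_pos hcol]
  have hcolR : ∀ i, levelCol r i = r i col := by
    intro i
    simp only [levelCol, hJr]
    rw [dif_pos hcol]
  have hSinv : ∀ i, inZinvsqrt2 (levelCol s i) := fun i => by rw [hcolS]; exact hse i col
  have hRinv : ∀ i, inZinvsqrt2 (levelCol r i) := fun i => by rw [hcolR]; exact hre i col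
  have hSk : ∀ i, inZsqrt2 (Real.sqrt 2 ^ k * s i col) := by
    intro i
    have h0 := ldeVec_mem hSinv i
    rw [hKs, hcolS] at h0
    exact h0
  have hRk : ∀ i, inZsqrt2 (Real.sqrt 2 ^ k * r i col) := by
    intro i
    have h0 := ldeVec_mem hRinv i
    rw [hKr, hcolR] at h0
    exact h0
  obtain ⟨pa, qa, hua⟩ := hSk a
  obtain ⟨pb, qb, hub⟩ := hSk b
  obtain ⟨Pa, Qa, hta⟩ := hRk a
  obtain ⟨Pb, Qb, htb⟩ := hRk b
  obtain ⟨Pc, Qc, htc⟩ := hRk c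
  obtain ⟨Pd, Qd, htd⟩ := hRk d
  have hScm : inZsqrt2 (Real.sqrt 2 ^ (k-1) * s c col) := by
    have h0 := (lde_le_iff (hSinv c)).mp hldec
    rwa [hcolS] at h0
  have hSdm : inZsqrt2 (Real.sqrt 2 ^ (k-1) * s d col) := by
    have h0 := (lde_le_iff (hSinv d)).mp hlded
    rwa [hcolS] at h0
  obtain ⟨xc, yc, hwc⟩ := hScm
  obtain ⟨xd, yd, hwd⟩ := hSdm
  have hps : (Real.sqrt 2 : ℝ) ^ k = Real.sqrt 2 ^ (k-1) * Real.sqrt 2 := by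
    rw [← pow_succ]; congr 1; omega
  have huc : Real.sqrt 2 ^ k * s c col = 2*(yc:ℝ) + (xc:ℝ) * Real.sqrt 2 := by
    rw [hps]
    linear_combination Real.sqrt 2 * hwc + (yc:ℝ) * alpha_sq
  have hud : Real.sqrt 2 ^ k * s d col = 2*(yd:ℝ) + (xd:ℝ) * Real.sqrt 2 := by
    rw [hps]
    linear_combination Real.sqrt 2 * hwd + (yd:ℝ) * alpha_sq
  have hpa_odd : ¬ (2 ∣ pa) := by
    intro h2
    have h3 := (lde_char (hSinv a) hk (by rw [hcolS]; exact hua)).2 h2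
    rw [hldea] at h3
    omega
  have hpb_odd : ¬ (2 ∣ pb) := by
    intro h2
    have h3 := (lde_char (hSinv b) hk (by rw [hcolS]; exact hub)).2 h2
    rw [hldeb] at h3
    omega
  -- matrix entry computations
  have hr' : r = Hmat n a c * (Hmat n b d * (Hmat n a b * (Hmat n b d * (Hmat n a c * s)))) := by
    rw [hr]; simp only [Matrix.mul_assoc]
  have e1a : (Hmat n a c * s) a col = (s a col + s c col) / Real.sqrt 2 := by
    rw [Hmul a c hac, if_pos rfl]
  have e1c : (Hmat n a c * s) c col = (s a col - s c col) / Real.sqrt 2 := by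
    rw [Hmul a c hac, if_neg hca, if_pos rfl]
  have e1b : (Hmat n a c * s) b col = s b col := by
    rw [Hmul a c hac, if_neg hba, if_neg hbc]
  have e1d : (Hmat n a c * s) d col = s d col := by
    rw [Hmul a c hac, if_neg hda, if_neg hdc]
  have e2b : (Hmat n b d * (Hmat n a c * s)) b col =
      ((Hmat n a c * s) b col + (Hmat n a c * s) d col) / Real.sqrt 2 := by
    rw [Hmul b d hbd, if_pos rfl]
  have e2d : (Hmat n b d * (Hmat n a c * s)) d col =
      ((Hmat n a c * s) b col - (Hmat n a c * s) d col) / Real.sqrt 2 := by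
    rw [Hmul b d hbd, if_neg hdb, if_pos rfl]
  have e2a : (Hmat n b d * (Hmat n a c * s)) a col = (Hmat n a c * s) a col := by
    rw [Hmul b d hbd, if_neg hab, if_neg had]
  have e2c : (Hmat n b d * (Hmat n a c * s)) c col = (Hmat n a c * s) c col := by
    rw [Hmul b d hbd, if_neg hcb, if_neg hcd]
  have e3a : (Hmat n a b * (Hmat n b d * (Hmat n a c * s))) a col =
      ((Hmat n b d * (Hmat n a c * s)) a col + (Hmat n b d * (Hmat n a c * s)) b col) / Real.sqrt 2 := by
    rw [Hmul a b hab, if_pos rfl]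
  have e3b : (Hmat n a b * (Hmat n b d * (Hmat n a c * s))) b col =
      ((Hmat n b d * (Hmat n a c * s)) a col - (Hmat n b d * (Hmat n a c * s)) b col) / Real.sqrt 2 := by
    rw [Hmul a b hab, if_neg hba, if_pos rfl]
  have e3c : (Hmat n a b * (Hmat n b d * (Hmat n a c * s))) c col =
      (Hmat n b d * (Hmat n a c * s)) c col := by
    rw [Hmul a b hab, if_neg hca, if_neg hcb]
  have e3d : (Hmat n a b * (Hmat n b d * (Hmat n a c * s))) d col =
      (Hmat n b d * (Hmat n a c * s)) d col := by
    rw [Hmul a b hab, if_neg hda, if_neg hdb]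
  have e4b : (Hmat n b d * (Hmat n a b * (Hmat n b d * (Hmat n a c * s)))) b col =
      ((Hmat n a b * (Hmat n b d * (Hmat n a c * s))) b col +
       (Hmat n a b * (Hmat n b d * (Hmat n a c * s))) d col) / Real.sqrt 2 := by
    rw [Hmul b d hbd, if_pos rfl]
  have e4d : (Hmat n b d * (Hmat n a b * (Hmat n b d * (Hmat n a c * s)))) d col =
      ((Hmat n a b * (Hmat n b d * (Hmat n a c * s))) b col -
       (Hmat n a b * (Hmat n b d * (Hmat n a c * s))) d col) / Real.sqrt 2 := by
    rw [Hmul b d hbd, if_neg hdb, if_pos rfl]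
  have e4a : (Hmat n b d * (Hmat n a b * (Hmat n b d * (Hmat n a c * s)))) a col =
      (Hmat n a b * (Hmat n b d * (Hmat n a c * s))) a col := by
    rw [Hmul b d hbd, if_neg hab, if_neg had]
  have e4c : (Hmat n b d * (Hmat n a b * (Hmat n b d * (Hmat n a c * s)))) c col =
      (Hmat n a b * (Hmat n b d * (Hmat n a c * s))) c col := by
    rw [Hmul b d hbd, if_neg hcb, if_neg hcd]
  have eRa : r a col =
      ((Hmat n b d * (Hmat n a b * (Hmat n b d * (Hmat n a c * s)))) a col +
       (Hmat n b d * (Hmat n a b * (Hmat n b d * (Hmat n a c * s)))) c col) / Real.sqrt 2 := by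
    rw [hr', Hmul a c hac, if_pos rfl]
  have eRc : r c col =
      ((Hmat n b d * (Hmat n a b * (Hmat n b d * (Hmat n a c * s)))) a col -
       (Hmat n b d * (Hmat n a b * (Hmat n b d * (Hmat n a c * s)))) c col) / Real.sqrt 2 := by
    rw [hr', Hmul a c hac, if_neg hca, if_pos rfl]
  have eRb : r b col =
      (Hmat n b d * (Hmat n a b * (Hmat n b d * (Hmat n a c * s)))) b col := by
    rw [hr', Hmul a c hac, if_neg hba, if_neg hbc]
  have eRd : r d col =
      (Hmat n b d * (Hmat n a b * (Hmat n b d * (Hmat n a c * s)))) d col := by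
    rw [hr', Hmul a c hac, if_neg hda, if_neg hdc]
  have Ra' : r a col = (((s a col + s c col)/Real.sqrt 2 + (s b col + s d col)/Real.sqrt 2)/Real.sqrt 2
      + (s a col - s c col)/Real.sqrt 2)/Real.sqrt 2 := by
    rw [eRa, e4a, e4c, e3a, e3c, e2a, e2b, e2c, e1a, e1b, e1c, e1d]
  have Rb' : r b col = (((s a col + s c col)/Real.sqrt 2 - (s b col + s d col)/Real.sqrt 2)/Real.sqrt 2
      + (s b col - s d col)/Real.sqrt 2)/Real.sqrt 2 := by
    rw [eRb, e4b, e3b, e3d, e2a, e2b, e2d, e1a, e1b, e1d]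
  have Rc' : r c col = (((s a col + s c col)/Real.sqrt 2 + (s b col + s d col)/Real.sqrt 2)/Real.sqrt 2
      - (s a col - s c col)/Real.sqrt 2)/Real.sqrt 2 := by
    rw [eRc, e4a, e4c, e3a, e3c, e2a, e2b, e2c, e1a, e1b, e1c, e1d]
  have Rd' : r d col = (((s a col + s c col)/Real.sqrt 2 - (s b col + s d col)/Real.sqrt 2)/Real.sqrt 2
      - (s b col - s d col)/Real.sqrt 2)/Real.sqrt 2 := by
    rw [eRd, e4d, e3b, e3d, e2a, e2b, e2d, e1a, e1b, e1d]
  have Ea : 2*Real.sqrt 2*(r a col) = (1+Real.sqrt 2) * s a col + s b col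
      + (1-Real.sqrt 2) * s c col + s d col := by
    rw [Ra']
    field_simp
    linear_combination (-2*Real.sqrt 2*(s a col - s c col)) * alpha_sq + (s a col * (Real.sqrt 2-1) - s c col * (1+Real.sqrt 2) - s b col - s d col) * alpha_sq
  have Eb : 2*Real.sqrt 2*(r b col) = s a col + (Real.sqrt 2-1) * s b col
      + s c col + (-1-Real.sqrt 2) * s d col := by
    rw [Rb']
    field_simp
    linear_combination (-2*Real.sqrt 2*(s b col - s d col)) * alpha_sq + (-s a col - s c col + s b col * (1+Real.sqrt 2) + s d col * (1-Real.sqrt 2)) * alpha_sq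
  have Ec : 2*Real.sqrt 2*(r c col) = (1-Real.sqrt 2) * s a col + s b col
      + (1+Real.sqrt 2) * s c col + s d col := by
    rw [Rc']
    field_simp
    linear_combination (2*Real.sqrt 2*(s a col - s c col)) * alpha_sq + (-s a col * (1+Real.sqrt 2) + s c col * (Real.sqrt 2-1) - s b col - s d col) * alpha_sq
  have Ed : 2*Real.sqrt 2*(r d col) = s a col + (-1-Real.sqrt 2) * s b col
      + s c col + (Real.sqrt 2-1) * s d col := by
    rw [Rd']
    field_simp
    linear_combination (2*Real.sqrt 2*(s b col - s d col)) * alpha_sq + (-s a col - s c col + s b col * (1-Real.sqrt 2) + s d col * (1+Real.sqrt 2)) * alpha_sq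
  -- integer equations
  have Ga : ((4*Qa : ℤ):ℝ) + ((2*Pa : ℤ):ℝ) * Real.sqrt 2 =
      ((pa+2*qa+pb-2*xc+2*yc+2*yd : ℤ):ℝ)
      + ((pa+qa+qb+xc-2*yc+xd : ℤ):ℝ) * Real.sqrt 2 := by
    push_cast
    linear_combination (Real.sqrt 2 ^ k) * Ea - 2*Real.sqrt 2 * hta
      + (1+Real.sqrt 2) * hua + hub + (1-Real.sqrt 2) * huc + hud
      + ((qa:ℝ) - (xc:ℝ) - 2*(Qa:ℝ)) * alpha_sq
  have Gb : ((4*Qb : ℤ):ℝ) + ((2*Pb : ℤ):ℝ) * Real.sqrt 2 =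
      ((pa-pb+2*qb+2*yc-2*yd-2*xd : ℤ):ℝ)
      + ((qa+pb-qb+xc-xd-2*yd : ℤ):ℝ) * Real.sqrt 2 := by
    push_cast
    linear_combination (Real.sqrt 2 ^ k) * Eb - 2*Real.sqrt 2 * htb
      + hua + (Real.sqrt 2-1) * hub + huc + (-1-Real.sqrt 2) * hud
      + ((qb:ℝ) - (xd:ℝ) - 2*(Qb:ℝ)) * alpha_sq
  have Gc : ((4*Qc : ℤ):ℝ) + ((2*Pc : ℤ):ℝ) * Real.sqrt 2 =
      ((pa+pb-2*qa+2*xc+2*yc+2*yd : ℤ):ℝ)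
      + ((-pa+qa+qb+xc+2*yc+xd : ℤ):ℝ) * Real.sqrt 2 := by
    push_cast
    linear_combination (Real.sqrt 2 ^ k) * Ec - 2*Real.sqrt 2 * htc
      + (1-Real.sqrt 2) * hua + hub + (1+Real.sqrt 2) * huc + hud
      + ((xc:ℝ) - (qa:ℝ) - 2*(Qc:ℝ)) * alpha_sq
  have Gd : ((4*Qd : ℤ):ℝ) + ((2*Pd : ℤ):ℝ) * Real.sqrt 2 =
      ((pa-pb-2*qb+2*yc+2*xd-2*yd : ℤ):ℝ)
      + ((qa-pb-qb+xc-xd+2*yd : ℤ):ℝ) * Real.sqrt 2 := by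
    push_cast
    linear_combination (Real.sqrt 2 ^ k) * Ed - 2*Real.sqrt 2 * htd
      + hua + (-1-Real.sqrt 2) * hub + huc + (Real.sqrt 2-1) * hud
      + ((xd:ℝ) - (qb:ℝ) - 2*(Qd:ℝ)) * alpha_sq
  obtain ⟨ia1, ia2⟩ := zsqrt2_uniq Ga
  obtain ⟨ib1, ib2⟩ := zsqrt2_uniq Gb
  obtain ⟨ic1, ic2⟩ := zsqrt2_uniq Gc
  obtain ⟨id1, id2⟩ := zsqrt2_uniq Gd
  clear Ga Gb Gc Gd Ea Eb Ec Ed Ra' Rb' Rc' Rd'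
  clear eRa eRb eRc eRd e4a e4b e4c e4d e3a e3b e3c e3d e2a e2b e2c e2d e1a e1b e1c e1d
  clear hua hub huc hud hwc hwd hps hr hr'
  clear hso hro hmod hldea hldeb hldec hlded
  clear hse hre hls hlr hKs hKr hJs hJr hSk hRk hSinv hcolS
  have hd1 : (2 : ℤ) ∣ Pb ↔ (2 : ℤ) ∣ Pa := by omega
  have hd2 : ¬ (2 : ℤ) ∣ Pc ↔ (2 : ℤ) ∣ Pa := by omega
  have hd3 : ¬ (2 : ℤ) ∣ Pd ↔ (2 : ℤ) ∣ Pa := by omega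
  -- characterizations
  have hta' : Real.sqrt 2 ^ k * levelCol r a = (Pa:ℝ) + (Qa:ℝ) * Real.sqrt 2 := by
    rw [hcolR]; exact hta
  have cha := lde_char (hRinv a) hk hta'
  have htb' : Real.sqrt 2 ^ k * levelCol r b = (Pb:ℝ) + (Qb:ℝ) * Real.sqrt 2 := by
    rw [hcolR]; exact htb
  have chb := lde_char (hRinv b) hk htb'
  have htc' : Real.sqrt 2 ^ k * levelCol r c = (Pc:ℝ) + (Qc:ℝ) * Real.sqrt 2 := by
    rw [hcolR]; exact htc
  have chc := lde_char (hRinv c) hk htc'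
  have htd' : Real.sqrt 2 ^ k * levelCol r d = (Pd:ℝ) + (Qd:ℝ) * Real.sqrt 2 := by
    rw [hcolR]; exact htd
  have chd := lde_char (hRinv d) hk htd'
  by_cases hPa : (2 : ℤ) ∣ Pa
  · right
    exact ⟨chc.1 (hd2.mpr hPa), chd.1 (hd3.mpr hPa), cha.2 hPa, chb.2 (hd1.mpr hPa)⟩
  · left
    refine ⟨cha.1 hPa, chb.1 (fun h => hPa (hd1.mp h)), chc.2 ?_, chd.2 ?_⟩
    · by_contra h; exact hPa (hd2.mp h)
    · by_contra h; exact hPa (hd3.mp h)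
end
end

section
/- Let n ≥ 1, let s, r ∈ O_n(ℤ[1/√2]), and let G be a generator Z_a (1 ≤ a ≤ n), X_{b,c} or H_{b,c} (1 ≤ b < c ≤ n) with r = ⟦G⟧·s. Then there exists a word 𝐆' over the basic generators 𝒢'_n = {X_{1,x} : 2 ≤ x ≤ n} ∪ {Z_1, H_{1,2}} such that 𝐆' ≈ G (as words over 𝒢_n) and level(𝐆' : s →* r) = max{level(s), level(r)}. -/
open Matrix

noncomputable section

namespace StB



variable {n : ℕ}

/-! ### ℤ[√2] closure lemmas -/

lemma inZ_zero : inZsqrt2 0 := ⟨0, 0, by norm_num⟩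

lemma inZ_one : inZsqrt2 1 := ⟨1, 0, by norm_num⟩

lemma inZ_sqrt2 : inZsqrt2 (Real.sqrt 2) := ⟨0, 1, by norm_num⟩

lemma inZ_neg {x : ℝ} (h : inZsqrt2 x) : inZsqrt2 (-x) := by
  obtain ⟨a, b, rfl⟩ := h; exact ⟨-a, -b, by push_cast; ring⟩

lemma inZ_add {x y : ℝ} (hx : inZsqrt2 x) (hy : inZsqrt2 y) : inZsqrt2 (x + y) := by
  obtain ⟨a, b, rfl⟩ := hx; obtain ⟨c, d, rfl⟩ := hy
  exact ⟨a + c, b + d, by push_cast; ring⟩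

lemma inZ_sub {x y : ℝ} (hx : inZsqrt2 x) (hy : inZsqrt2 y) : inZsqrt2 (x - y) :=
  inZ_add hx (inZ_neg hy)

lemma inZ_neg_iff {x : ℝ} : inZsqrt2 (-x) ↔ inZsqrt2 x :=
  ⟨fun h => by simpa using inZ_neg h, inZ_neg⟩

lemma inZ_one_add_sqrt2 : inZsqrt2 (1 + Real.sqrt 2) := inZ_add inZ_one inZ_sqrt2

lemma cong2_neg {u v : ℝ} (hv : inZsqrt2 v) : cong2 (-u) v ↔ cong2 u v := by
  unfold cong2
  constructor
  · intro h
    have h2 : inZsqrt2 (-((-u - v) / 2) - v) := inZ_sub (inZ_neg h) hv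
    have : (u - v) / 2 = -((-u - v) / 2) - v := by ring
    rwa [this]
  · intro h
    have h2 : inZsqrt2 (-((u - v) / 2) - v) := inZ_sub (inZ_neg h) hv
    have : (-u - v) / 2 = -((u - v) / 2) - v := by ring
    rwa [this]

/-! ### levelJ lemmas -/

lemma levelJ_bddAbove (M : Matrix (Fin n) (Fin n) ℝ) :
    ∀ m ∈ {m : ℕ | ∃ i : Fin n, m = (i : ℕ) + 1 ∧
      ∃ r : Fin n, M r i ≠ (if r = i then (1 : ℝ) else 0)}, m ≤ n := by
  rintro m ⟨i, rfl, -⟩; exact i.isLt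

lemma levelJ_le_n (M : Matrix (Fin n) (Fin n) ℝ) : levelJ M ≤ n :=
  csSup_le' (levelJ_bddAbove M)

lemma levelJ_ge {M : Matrix (Fin n) (Fin n) ℝ} {i r : Fin n}
    (h : M r i ≠ (if r = i then (1 : ℝ) else 0)) : (i : ℕ) + 1 ≤ levelJ M :=
  le_csSup ⟨n, levelJ_bddAbove M⟩ ⟨i, rfl, r, h⟩

lemma col_std {M : Matrix (Fin n) (Fin n) ℝ} {i : Fin n}
    (h : levelJ M ≤ (i : ℕ)) (r : Fin n) : M r i = (if r = i then (1 : ℝ) else 0) := by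
  by_contra hc
  have := levelJ_ge hc
  omega

/-! ### ldeVec lemmas -/

lemma ldeVec_eq_zero {v : Fin n → ℝ} (h : ∀ i, inZsqrt2 (v i)) : ldeVec v = 0 := by
  apply Nat.sInf_eq_zero.mpr
  left
  intro i
  simpa using h i

lemma mul_sign_iff {k : ℕ} {c x : ℝ} (hc : c = 1 ∨ c = -1) :
    inZsqrt2 (Real.sqrt 2 ^ k * (c * x)) ↔ inZsqrt2 (Real.sqrt 2 ^ k * x) := by
  rcases hc with rfl | rfl
  · rw [one_mul]
  · rw [show Real.sqrt 2 ^ k * (-1 * x) = -(Real.sqrt 2 ^ k * x) by ring, inZ_neg_iff]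

lemma ldeVec_signed (e : Equiv.Perm (Fin n)) (ε : Fin n → ℝ)
    (hε : ∀ i, ε i = 1 ∨ ε i = -1) (v : Fin n → ℝ) :
    ldeVec (fun r => ε r * v (e r)) = ldeVec v := by
  unfold ldeVec
  congr 1
  ext k
  simp only [Set.mem_setOf_eq]
  constructor
  · intro h j
    have := h (e.symm j)
    rw [Equiv.apply_symm_apply] at this
    exact (mul_sign_iff (hε _)).mp this
  · intro h i
    exact (mul_sign_iff (hε _)).mpr (h (e i))

lemma cong2_sign {k : ℕ} {c x : ℝ} (hc : c = 1 ∨ c = -1) :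
    (cong2 (Real.sqrt 2 ^ k * (c * x)) 1 ∨
      cong2 (Real.sqrt 2 ^ k * (c * x)) (1 + Real.sqrt 2)) ↔
    (cong2 (Real.sqrt 2 ^ k * x) 1 ∨
      cong2 (Real.sqrt 2 ^ k * x) (1 + Real.sqrt 2)) := by
  rcases hc with rfl | rfl
  · rw [one_mul]
  · rw [show Real.sqrt 2 ^ k * (-1 * x) = -(Real.sqrt 2 ^ k * x) by ring]
    exact or_congr (cong2_neg inZ_one) (cong2_neg inZ_one_add_sqrt2)

lemma card_signed (e : Equiv.Perm (Fin n)) (ε : Fin n → ℝ)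
    (hε : ∀ i, ε i = 1 ∨ ε i = -1) (v : Fin n → ℝ) (k : ℕ) :
    Nat.card {i : Fin n // cong2 (Real.sqrt 2 ^ k * (ε i * v (e i))) 1 ∨
        cong2 (Real.sqrt 2 ^ k * (ε i * v (e i))) (1 + Real.sqrt 2)} =
    Nat.card {i : Fin n // cong2 (Real.sqrt 2 ^ k * v i) 1 ∨
        cong2 (Real.sqrt 2 ^ k * v i) (1 + Real.sqrt 2)} := by
  apply Nat.card_congr
  exact Equiv.subtypeEquiv e (fun i => cong2_sign (hε i))

end StB
namespace StB

variable {n : ℕ}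

/-! ### Lex order helpers -/

lemma lexle_fst_lt {a b : ℕ} {x y : ℕ ×ₗ ℕ} (h : a < b) : toLex (a, x) ≤ toLex (b, y) :=
  Prod.Lex.le_iff.mpr (Or.inl h)

lemma pair_bot_le (y : ℕ ×ₗ ℕ) : toLex ((0 : ℕ), (0 : ℕ)) ≤ y := by
  have hy : y = toLex (ofLex y) := rfl
  rw [hy]
  apply Prod.Lex.le_iff.mpr
  rcases Nat.eq_zero_or_pos (ofLex y).1 with h | h
  · exact Or.inr ⟨h.symm, Nat.zero_le _⟩
  · exact Or.inl h

lemma lexle_bot {t j : ℕ} (h : t ≤ j) (y : ℕ ×ₗ ℕ) :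
    toLex (t, toLex ((0 : ℕ), (0 : ℕ))) ≤ toLex (j, y) := by
  rcases h.lt_or_eq with h | rfl
  · exact lexle_fst_lt h
  · exact Prod.Lex.le_iff.mpr (Or.inr ⟨rfl, pair_bot_le y⟩)

lemma level_toLex (M : Matrix (Fin n) (Fin n) ℝ) :
    ∃ y, level M = toLex (levelJ M, y) := by
  unfold level
  split_ifs with h1 h2
  · exact ⟨_, by rw [h1]⟩
  · exact ⟨_, rfl⟩
  · exact ⟨_, rfl⟩

lemma level_ge_of_levelJ {M : Matrix (Fin n) (Fin n) ℝ} {t : ℕ} (h : t ≤ levelJ M) :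
    toLex (t, toLex ((0 : ℕ), (0 : ℕ))) ≤ level M := by
  obtain ⟨y, hy⟩ := level_toLex M
  rw [hy]
  exact lexle_bot h y

/-! ### The key level bound for signed permutation actions -/

lemma level_sAct_le (t : ℕ) (e : Equiv.Perm (Fin n)) (ε : Fin n → ℝ)
    (hε : ∀ i, ε i = 1 ∨ ε i = -1)
    (hfix : ∀ i : Fin n, t ≤ (i : ℕ) → e i = i ∧ ε i = 1)
    (M : Matrix (Fin n) (Fin n) ℝ) :
    level (fun r i => ε r * M (e r) i) ≤
      max (level M) (toLex (t, toLex ((0 : ℕ), (0 : ℕ)))) := by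
  set N : Matrix (Fin n) (Fin n) ℝ := fun r i => ε r * M (e r) i with hN
  -- levelJ N ≤ max (levelJ M) t
  have hJ : levelJ N ≤ max (levelJ M) t := by
    apply csSup_le'
    rintro m ⟨i, rfl, rr, hne⟩
    by_contra hgt
    push_neg at hgt
    have hiM : levelJ M ≤ (i : ℕ) := by omega
    have hit : t ≤ (i : ℕ) := by omega
    apply hne
    have hcol := col_std hiM
    have hei : e i = i := (hfix i hit).1
    show ε rr * M (e rr) i = _
    rw [hcol (e rr)]
    by_cases hri : rr = i
    · subst hri
      rw [hei]
      simp [(hfix rr hit).2]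
    · have : e rr ≠ i := by
        intro hc
        exact hri (e.injective (by rw [hc, hei]))
      rw [if_neg this, if_neg hri, mul_zero]
  rcases lt_trichotomy (levelJ N) (levelJ M) with h | h | h
  · obtain ⟨y, hy⟩ := level_toLex N
    obtain ⟨z, hz⟩ := level_toLex M
    rw [hy, hz]
    exact le_max_of_le_left (lexle_fst_lt h)
  · -- equal levelJ: levels are equal
    apply le_max_of_le_left
    apply le_of_eq
    by_cases h0 : levelJ M = 0
    · unfold level
      rw [h]
      simp [h0]
    · have hlt : levelJ M - 1 < n := by
        have := levelJ_le_n M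
        omega
      have hcol : levelCol N = fun r => ε r * levelCol M (e r) := by
        funext r
        unfold levelCol
        rw [h, dif_pos hlt, dif_pos hlt]
      have e3 : ldeVec (levelCol N) = ldeVec (levelCol M) := by
        rw [hcol]
        exact ldeVec_signed e ε hε _
      have e4 : Nat.card {i : Fin n //
            cong2 (Real.sqrt 2 ^ ldeVec (levelCol M) * levelCol N i) 1 ∨
            cong2 (Real.sqrt 2 ^ ldeVec (levelCol M) * levelCol N i) (1 + Real.sqrt 2)} =
          Nat.card {i : Fin n //
            cong2 (Real.sqrt 2 ^ ldeVec (levelCol M) * levelCol M i) 1 ∨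
            cong2 (Real.sqrt 2 ^ ldeVec (levelCol M) * levelCol M i) (1 + Real.sqrt 2)} := by
        simp only [hcol]
        exact card_signed e ε hε _ _
      unfold level
      rw [h, e3, e4]
  · -- levelJ N > levelJ M : the relevant column is a signed standard vector
    have hNt : levelJ N ≤ t := by omega
    have hN0 : levelJ N ≠ 0 := by omega
    have hlt : levelJ N - 1 < n := by
      have := levelJ_le_n N
      have := levelJ_le_n M
      omega
    set i0 : Fin n := ⟨levelJ N - 1, hlt⟩ with hi0
    have hiM : levelJ M ≤ (i0 : ℕ) := by
      show levelJ M ≤ levelJ N - 1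
      omega
    have hlde : ldeVec (levelCol N) = 0 := by
      apply ldeVec_eq_zero
      intro rr
      unfold levelCol
      rw [dif_pos hlt]
      show inZsqrt2 (ε rr * M (e rr) i0)
      rw [col_std hiM (e rr)]
      rcases hε rr with h1 | h1 <;> rw [h1] <;> split_ifs
      · simpa using inZ_one
      · simpa using inZ_zero
      · simpa using inZ_neg inZ_one
      · simpa using inZ_zero
    apply le_max_of_le_right
    unfold level
    rw [if_neg hN0, if_pos hlde]
    exact lexle_bot hNt _

/-- pure permutation version -/
lemma level_perm_le (t : ℕ) (e : Equiv.Perm (Fin n))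
    (hfix : ∀ i : Fin n, t ≤ (i : ℕ) → e i = i)
    (M : Matrix (Fin n) (Fin n) ℝ) :
    level (fun r i => M (e r) i) ≤
      max (level M) (toLex (t, toLex ((0 : ℕ), (0 : ℕ)))) := by
  have := level_sAct_le t e (fun _ => 1) (fun _ => Or.inl rfl)
    (fun i hi => ⟨hfix i hi, rfl⟩) M
  simpa using this

end StB
namespace StB

open Matrix

variable {n : ℕ}

lemma Zmat_mul (a : Fin n) (M : Matrix (Fin n) (Fin n) ℝ) :
    Zmat n a * M = fun r i => (if r = a then (-1 : ℝ) else 1) * M r i := by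
  funext r i
  rw [Matrix.mul_apply, Finset.sum_eq_single r]
  · show (if r = r then _ else (0:ℝ)) * M r i = _
    rw [if_pos rfl]
  · intro m _ hm
    show (if r = m then _ else (0:ℝ)) * M m i = 0
    rw [if_neg (fun h => hm h.symm), zero_mul]
  · intro h
    exact absurd (Finset.mem_univ r) h

lemma Xmat_mul (b c : Fin n) (M : Matrix (Fin n) (Fin n) ℝ) :
    Xmat n b c * M = fun r i => M (Equiv.swap b c r) i := by
  funext r i
  rw [Matrix.mul_apply, Finset.sum_eq_single (Equiv.swap b c r)]
  · show (if Equiv.swap b c r = Equiv.swap b c r then (1:ℝ) else 0) * _ = _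
    rw [if_pos rfl, one_mul]
  · intro m _ hm
    show (if m = Equiv.swap b c r then (1:ℝ) else 0) * M m i = 0
    rw [if_neg hm, zero_mul]
  · intro h
    exact absurd (Finset.mem_univ _) h

lemma Hmat_row_b (b c m : Fin n) (hbc : b ≠ c) :
    Hmat n b c b m = (if m = b then (1 / Real.sqrt 2 : ℝ) else 0) +
      (if m = c then (1 / Real.sqrt 2 : ℝ) else 0) := by
  unfold Hmat
  by_cases h1 : m = b
  · subst h1; simp [hbc]
  · by_cases h2 : m = c
    · subst h2; simp [h1, hbc]
    · simp [h1, h2, Ne.symm h1]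

lemma Hmat_row_c (b c m : Fin n) (hbc : b ≠ c) :
    Hmat n b c c m = (if m = b then (1 / Real.sqrt 2 : ℝ) else 0) +
      (if m = c then (-(1 / Real.sqrt 2) : ℝ) else 0) := by
  unfold Hmat
  by_cases h1 : m = b
  · subst h1; simp [hbc, Ne.symm hbc]
  · by_cases h2 : m = c
    · subst h2; simp [h1, hbc, Ne.symm hbc]
    · simp [h1, h2, Ne.symm h2, Ne.symm hbc]

lemma Hmat_row_other (b c r m : Fin n) (hrb : r ≠ b) (hrc : r ≠ c) :
    Hmat n b c r m = (if m = r then (1 : ℝ) else 0) := by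
  unfold Hmat
  by_cases h1 : m = r
  · subst h1; simp [hrb, hrc]
  · simp only [hrb, hrc, h1, if_false, if_neg (fun h : r = m => h1 h.symm)]
    simp

lemma Hmat_mul (b c : Fin n) (hbc : b ≠ c) (M : Matrix (Fin n) (Fin n) ℝ) :
    Hmat n b c * M = fun r i =>
      if r = b then (M b i + M c i) / Real.sqrt 2
      else if r = c then (M b i - M c i) / Real.sqrt 2
      else M r i := by
  funext r i
  rw [Matrix.mul_apply]
  by_cases hrb : r = b
  · subst hrb
    rw [if_pos rfl]
    rw [Finset.sum_congr rfl (fun m _ => by rw [Hmat_row_b r c m hbc])]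
    simp only [add_mul, ite_mul, zero_mul, Finset.sum_add_distrib, Finset.sum_ite_eq']
    simp only [Finset.mem_univ, if_true]
    ring
  · by_cases hrc : r = c
    · subst hrc
      rw [if_neg hrb, if_pos rfl]
      rw [Finset.sum_congr rfl (fun m _ => by rw [Hmat_row_c b r m hbc])]
      simp only [add_mul, ite_mul, zero_mul, Finset.sum_add_distrib, Finset.sum_ite_eq']
      simp only [Finset.mem_univ, if_true]
      ring
    · rw [if_neg hrb, if_neg hrc]
      rw [Finset.sum_congr rfl (fun m _ => by rw [Hmat_row_other b c r m hrb hrc])]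
      simp only [ite_mul, zero_mul, one_mul, Finset.sum_ite_eq', Finset.mem_univ, if_true]

end StB
namespace StB

open Matrix

variable {n : ℕ}

lemma swap_conj (p q b c r : Fin n) :
    Equiv.swap p q (Equiv.swap b c (Equiv.swap p q r)) =
      Equiv.swap (Equiv.swap p q b) (Equiv.swap p q c) r := by
  rw [Equiv.swap_apply_apply]
  simp [Equiv.Perm.mul_apply, Equiv.swap_apply_self]

lemma Xmat_invol (p q : Fin n) (M : Matrix (Fin n) (Fin n) ℝ) :
    Xmat n p q * (Xmat n p q * M) = M := by
  rw [Xmat_mul, Xmat_mul]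
  funext r i
  beta_reduce
  rw [Equiv.swap_apply_self]

lemma conj_X (p q b c : Fin n) (M : Matrix (Fin n) (Fin n) ℝ) :
    Xmat n p q * (Xmat n b c * (Xmat n p q * M)) =
      Xmat n (Equiv.swap p q b) (Equiv.swap p q c) * M := by
  rw [Xmat_mul, Xmat_mul, Xmat_mul, Xmat_mul]
  funext r i
  beta_reduce
  rw [swap_conj]

lemma conj_Z (p q a : Fin n) (M : Matrix (Fin n) (Fin n) ℝ) :
    Xmat n p q * (Zmat n a * (Xmat n p q * M)) = Zmat n (Equiv.swap p q a) * M := by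
  rw [Xmat_mul, Zmat_mul, Xmat_mul, Zmat_mul]
  funext r i
  beta_reduce
  rw [Equiv.swap_apply_self]
  congr 1
  by_cases h : Equiv.swap p q r = a
  · rw [if_pos h, if_pos (Equiv.swap_apply_eq_iff.mp h)]
  · rw [if_neg h, if_neg (fun hc => h (by rw [hc, Equiv.swap_apply_self]))]

lemma conj_H (p q b c : Fin n) (hbc : b ≠ c) (M : Matrix (Fin n) (Fin n) ℝ) :
    Xmat n p q * (Hmat n b c * (Xmat n p q * M)) =
      Hmat n (Equiv.swap p q b) (Equiv.swap p q c) * M := by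
  have hbc' : Equiv.swap p q b ≠ Equiv.swap p q c :=
    fun h => hbc ((Equiv.swap p q).injective h)
  rw [Hmat_mul b c hbc, Hmat_mul _ _ hbc']
  erw [Xmat_mul, Xmat_mul]
  funext r i
  beta_reduce
  simp only [Equiv.swap_apply_self]
  have e1 : (Equiv.swap p q r = b) = (r = Equiv.swap p q b) := by
    apply propext
    constructor
    · exact fun h => Equiv.swap_apply_eq_iff.mp h
    · exact fun h => by rw [h, Equiv.swap_apply_self]
  have e2 : (Equiv.swap p q r = c) = (r = Equiv.swap p q c) := by
    apply propext
    constructor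
    · exact fun h => Equiv.swap_apply_eq_iff.mp h
    · exact fun h => by rw [h, Equiv.swap_apply_self]
  simp only [e1, e2]

end StB
namespace StB

variable {n : ℕ}

/-- Dichotomy: if column `m` differs between `s` and the standard basis vector
in `r` whenever `s` is standard there, then `(m+1,0,0) ≤ max(level s, level r)`. -/
lemma crux (s r : Matrix (Fin n) (Fin n) ℝ) (m rr : Fin n)
    (h : (∀ x, s x m = (if x = m then (1 : ℝ) else 0)) →
      r rr m ≠ (if rr = m then (1 : ℝ) else 0)) :
    toLex ((m : ℕ) + 1, toLex ((0 : ℕ), (0 : ℕ))) ≤ max (level s) (level r) := by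
  by_cases hs : (m : ℕ) + 1 ≤ levelJ s
  · exact le_max_of_le_left (level_ge_of_levelJ hs)
  · have hstd : ∀ x, s x m = (if x = m then (1 : ℝ) else 0) := by
      intro x
      exact col_std (by omega) x
    exact le_max_of_le_right (level_ge_of_levelJ (levelJ_ge (h hstd)))

end StB

open StB in
theorem simple_to_basic (n : ℕ) (hn : 1 ≤ n) (s r : Matrix (Fin n) (Fin n) ℝ)
    (hso : s * sᵀ = 1) (hse : ∀ i j, inZinvsqrt2 (s i j))
    (hro : r * rᵀ = 1) (hre : ∀ i j, inZinvsqrt2 (r i j))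
    (G : Gen n) (hG : G.ordered) (hr : r = gsem G * s) :
    ∃ w : List (Gen n), (∀ g ∈ w, g.isBasic) ∧ WRel n w [G] ∧
      seqLevel w s = max (level s) (level r) := by
  rcases G with a | ⟨b, c, hbc⟩ | ⟨b, c, hbc⟩
  · -- Z case
    by_cases ha : (a : ℕ) = 0
    · refine ⟨[Gen.Z a], ?_, WRel.refl _, ?_⟩
      · intro g hg
        simp only [List.mem_singleton] at hg
        subst hg
        exact ha
      · simp only [seqLevel, wsem, one_mul, ← hr]
        exact max_comm _ _
    · set z0 : Fin n := ⟨0, by omega⟩ with hz0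
      have hza : z0 ≠ a := fun h => ha (by rw [← h])
      refine ⟨[Gen.X z0 a hza, Gen.Z z0, Gen.X z0 a hza], ?_, ?_, ?_⟩
      · intro g hg
        simp only [List.mem_cons, List.not_mem_nil, or_false, List.mem_singleton] at hg
        rcases hg with rfl | rfl | rfl <;> rfl
      · have r1 : WRel n [Gen.X z0 a hza, Gen.Z z0, Gen.X z0 a hza]
            [Gen.X z0 a hza, Gen.X z0 a hza, Gen.Z a] := by
          simpa using WRel.append_left [Gen.X z0 a hza] (WRel.rel_zx z0 a hza)
        have r2 : WRel n [Gen.X z0 a hza, Gen.X z0 a hza, Gen.Z a] [Gen.Z a] := by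
          simpa using WRel.append_right [Gen.Z a] (WRel.rel_xx z0 a hza)
        exact r1.trans r2
      · have hfix : ∀ i : Fin n, (a : ℕ) + 1 ≤ (i : ℕ) → Equiv.swap z0 a i = i := by
          intro i hi
          apply Equiv.swap_apply_of_ne_of_ne
          · intro h
            have h2 : (i : ℕ) = 0 := by rw [h]
            omega
          · intro h
            have h2 : (i : ℕ) = (a : ℕ) := congrArg Fin.val h
            omega
        have e1 : gsem (Gen.X z0 a hza) * (wsem ([] : List (Gen n)) * s) =
            fun rr i => s (Equiv.swap z0 a rr) i := by
          simp [wsem, gsem, Xmat_mul]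
          rfl
        have e2 : gsem (Gen.Z z0) * (wsem [Gen.X z0 a hza] * s) =
            fun rr i => (if rr = z0 then (-1 : ℝ) else 1) * s (Equiv.swap z0 a rr) i := by
          simp [wsem, gsem, Xmat_mul, Zmat_mul, Matrix.mul_assoc]
          erw [Zmat_mul]
          funext rr i
          split_ifs <;> simp
        have e3 : gsem (Gen.X z0 a hza) * (wsem [Gen.Z z0, Gen.X z0 a hza] * s) = r := by
          simp only [wsem, gsem, Matrix.mul_one]
          rw [Matrix.mul_assoc, conj_Z, Equiv.swap_apply_left]
          exact hr.symm
        have l1 : level (fun rr i => s (Equiv.swap z0 a rr) i) ≤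
            max (level s) (toLex ((a : ℕ) + 1, toLex ((0:ℕ), (0:ℕ)))) :=
          level_perm_le _ _ hfix s
        have l2 : level (fun rr i => (if rr = z0 then (-1:ℝ) else 1) * s (Equiv.swap z0 a rr) i) ≤
            max (level s) (toLex ((a : ℕ) + 1, toLex ((0:ℕ), (0:ℕ)))) := by
          apply level_sAct_le
          · intro i
            split_ifs
            · exact Or.inr rfl
            · exact Or.inl rfl
          · intro i hi
            refine ⟨hfix i hi, if_neg ?_⟩
            intro h
            have := congrArg Fin.val h
            simp [hz0] at this
            omega
        have hcrux : toLex ((a : ℕ) + 1, toLex ((0:ℕ), (0:ℕ))) ≤ max (level s) (level r) := by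
          apply crux s r a a
          intro hstd
          rw [hr]
          show (Zmat n a * s) a a ≠ _
          rw [Zmat_mul]
          show (if a = a then (-1:ℝ) else 1) * s a a ≠ _
          rw [if_pos rfl, hstd a]
          norm_num
        simp only [seqLevel]
        rw [e1, e2, e3]
        apply le_antisymm
        · exact max_le (le_max_right _ _)
            (max_le (l2.trans (max_le (le_max_left _ _) hcrux))
              (max_le (l1.trans (max_le (le_max_left _ _) hcrux)) (le_max_left _ _)))
        · exact max_le (le_max_of_le_right (le_max_of_le_right (le_max_right _ _)))
            (le_max_left _ _)
  · -- X case
    have hlt : b < c := hG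
    have hltn : (b : ℕ) < (c : ℕ) := hlt
    by_cases hb : (b : ℕ) = 0
    · refine ⟨[Gen.X b c hbc], ?_, WRel.refl _, ?_⟩
      · intro g hg
        simp only [List.mem_singleton] at hg
        subst hg
        exact hb
      · simp only [seqLevel, wsem, one_mul, ← hr]
        exact max_comm _ _
    · set z0 : Fin n := ⟨0, by omega⟩ with hz0
      have hzb : z0 ≠ b := fun h => hb (by rw [← h])
      have hzc : z0 ≠ c := by
        intro h
        have : (0 : ℕ) = (c : ℕ) := congrArg Fin.val h
        omega
      have hcb : c ≠ b := Ne.symm hbc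
      refine ⟨[Gen.X z0 b hzb, Gen.X z0 c hzc, Gen.X z0 b hzb], ?_, ?_, ?_⟩
      · intro g hg
        simp only [List.mem_cons, List.not_mem_nil, or_false, List.mem_singleton] at hg
        rcases hg with rfl | rfl | rfl <;> rfl
      · have r1 : WRel n [Gen.X z0 b hzb, Gen.X z0 c hzc]
            [Gen.X b c hbc, Gen.X z0 b hzb] := (WRel.rel_xc2 z0 b c hzb hzc hbc).symm
        have r2 : WRel n [Gen.X z0 b hzb, Gen.X z0 c hzc, Gen.X z0 b hzb]
            [Gen.X b c hbc, Gen.X z0 b hzb, Gen.X z0 b hzb] := by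
          simpa using WRel.append_right [Gen.X z0 b hzb] r1
        have r3 : WRel n [Gen.X b c hbc, Gen.X z0 b hzb, Gen.X z0 b hzb] [Gen.X b c hbc] := by
          simpa using WRel.append_left [Gen.X b c hbc] (WRel.rel_xx z0 b hzb)
        exact r2.trans r3
      · have hfixb : ∀ i : Fin n, (c : ℕ) + 1 ≤ (i : ℕ) → Equiv.swap z0 b i = i := by
          intro i hi
          apply Equiv.swap_apply_of_ne_of_ne
          · intro h
            have h2 : (i : ℕ) = 0 := by rw [h]
            omega
          · intro h
            have h2 : (i : ℕ) = (b : ℕ) := congrArg Fin.val h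
            omega
        have hfixc : ∀ i : Fin n, (c : ℕ) + 1 ≤ (i : ℕ) → Equiv.swap z0 c i = i := by
          intro i hi
          apply Equiv.swap_apply_of_ne_of_ne
          · intro h
            have h2 : (i : ℕ) = 0 := by rw [h]
            omega
          · intro h
            have h2 : (i : ℕ) = (c : ℕ) := congrArg Fin.val h
            omega
        have e1 : gsem (Gen.X z0 b hzb) * (wsem ([] : List (Gen n)) * s) =
            fun rr i => s (Equiv.swap z0 b rr) i := by
          simp [wsem, gsem, Xmat_mul]
          rfl
        have e2 : gsem (Gen.X z0 c hzc) * (wsem [Gen.X z0 b hzb] * s) =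
            fun rr i => s (((Equiv.swap z0 c).trans (Equiv.swap z0 b)) rr) i := by
          simp [wsem, gsem, Xmat_mul, Matrix.mul_assoc, Matrix.mul_one, Equiv.trans_apply]
          erw [Xmat_mul]
        have e3 : gsem (Gen.X z0 b hzb) * (wsem [Gen.X z0 c hzc, Gen.X z0 b hzb] * s) = r := by
          simp only [wsem, gsem, Matrix.mul_one]
          rw [Matrix.mul_assoc, conj_X, Equiv.swap_apply_left,
            Equiv.swap_apply_of_ne_of_ne hzc.symm hcb]
          exact hr.symm
        have l1 : level (fun rr i => s (Equiv.swap z0 b rr) i) ≤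
            max (level s) (toLex ((c : ℕ) + 1, toLex ((0:ℕ), (0:ℕ)))) :=
          level_perm_le _ _ hfixb s
        have l2 : level (fun rr i => s (((Equiv.swap z0 c).trans (Equiv.swap z0 b)) rr) i) ≤
            max (level s) (toLex ((c : ℕ) + 1, toLex ((0:ℕ), (0:ℕ)))) := by
          apply level_perm_le
          intro i hi
          rw [Equiv.trans_apply, hfixc i hi, hfixb i hi]
        have hcrux : toLex ((c : ℕ) + 1, toLex ((0:ℕ), (0:ℕ))) ≤ max (level s) (level r) := by
          apply crux s r c b
          intro hstd
          rw [hr]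
          show (Xmat n b c * s) b c ≠ _
          rw [Xmat_mul]
          show s (Equiv.swap b c b) c ≠ _
          rw [Equiv.swap_apply_left, hstd c, if_pos rfl, if_neg hbc]
          norm_num
        simp only [seqLevel]
        rw [e1, e2, e3]
        apply le_antisymm
        · exact max_le (le_max_right _ _)
            (max_le (l2.trans (max_le (le_max_left _ _) hcrux))
              (max_le (l1.trans (max_le (le_max_left _ _) hcrux)) (le_max_left _ _)))
        · exact max_le (le_max_of_le_right (le_max_of_le_right (le_max_right _ _)))
            (le_max_left _ _)
  · -- H case
    have hlt : b < c := hG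
    have hbcn : (b : ℕ) < (c : ℕ) := hlt
    have hcb : c ≠ b := Ne.symm hbc
    by_cases hb0 : (b : ℕ) = 0
    · by_cases hc1 : (c : ℕ) = 1
      · refine ⟨[Gen.H b c hbc], ?_, WRel.refl _, ?_⟩
        · intro g hg
          simp only [List.mem_singleton] at hg
          subst hg
          exact ⟨hb0, hc1⟩
        · simp only [seqLevel, wsem, one_mul, ← hr]
          exact max_comm _ _
      · -- b = 0, c ≥ 2 : 7-generator word
        have hc2 : 2 ≤ (c : ℕ) := by omega
        have hn3 : 2 < n := lt_of_le_of_lt hc2 c.isLt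
        set f1 : Fin n := ⟨1, by omega⟩ with hf1
        have hbf : b ≠ f1 := by
          intro h
          have h2 : (b : ℕ) = 1 := congrArg Fin.val h
          omega
        have hfc : f1 ≠ c := by
          intro h
          have h2 : (1 : ℕ) = (c : ℕ) := congrArg Fin.val h
          omega
        have hcf : c ≠ f1 := Ne.symm hfc
        set x1 : Gen n := Gen.X b f1 hbf with hx1
        set xc : Gen n := Gen.X b c hbc with hxc
        set h1 : Gen n := Gen.H b f1 hbf with hh1
        refine ⟨[x1, xc, x1, h1, x1, xc, x1], ?_, ?_, ?_⟩
        · intro g hg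
          simp only [List.mem_cons, List.not_mem_nil, or_false, List.mem_singleton,
            hx1, hxc, hh1] at hg
          rcases hg with rfl | rfl | rfl | rfl | rfl | rfl | rfl
          · exact hb0
          · exact hb0
          · exact hb0
          · exact ⟨hb0, rfl⟩
          · exact hb0
          · exact hb0
          · exact hb0
        · -- word relation
          have hT : WRel n [x1, xc, x1] [Gen.X f1 c hfc] := by
            have rT1 : WRel n [x1, xc] [Gen.X f1 c hfc, x1] :=
              (WRel.rel_xc2 b f1 c hbf hbc hfc).symm
            have rT2 : WRel n [x1, xc, x1] [Gen.X f1 c hfc, x1, x1] := by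
              simpa using WRel.append_right [x1] rT1
            have rT3 : WRel n [Gen.X f1 c hfc, x1, x1] [Gen.X f1 c hfc] := by
              simpa using WRel.append_left [Gen.X f1 c hfc] (WRel.rel_xx b f1 hbf)
            exact rT2.trans rT3
          have w1 : WRel n [x1, xc, x1, h1, x1, xc, x1]
              [Gen.X f1 c hfc, h1, x1, xc, x1] := by
            simpa using WRel.append_right ([h1] ++ [x1, xc, x1]) hT
          have w2 : WRel n [Gen.X f1 c hfc, h1, x1, xc, x1]
              [Gen.X f1 c hfc, h1, Gen.X f1 c hfc] := by
            simpa using WRel.append_left [Gen.X f1 c hfc, h1] hT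
          have w3 : WRel n [Gen.X f1 c hfc, h1] [Gen.H b c hbc, Gen.X f1 c hfc] :=
            (WRel.rel_hx5 b f1 c hbf hbc hfc).symm
          have w4 : WRel n [Gen.X f1 c hfc, h1, Gen.X f1 c hfc]
              [Gen.H b c hbc, Gen.X f1 c hfc, Gen.X f1 c hfc] := by
            simpa using WRel.append_right [Gen.X f1 c hfc] w3
          have w5 : WRel n [Gen.H b c hbc, Gen.X f1 c hfc, Gen.X f1 c hfc]
              [Gen.H b c hbc] := by
            simpa using WRel.append_left [Gen.H b c hbc] (WRel.rel_xx f1 c hfc)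
          exact w1.trans (w2.trans (w4.trans w5))
        · -- level computation
          have fixb1 : ∀ i : Fin n, (c : ℕ) + 1 ≤ (i : ℕ) → Equiv.swap b f1 i = i := by
            intro i hi
            apply Equiv.swap_apply_of_ne_of_ne
            · intro h; have h2 : (i : ℕ) = (b : ℕ) := congrArg Fin.val h; omega
            · intro h; have h2 : (i : ℕ) = 1 := congrArg Fin.val h; omega
          have fixbc : ∀ i : Fin n, (c : ℕ) + 1 ≤ (i : ℕ) → Equiv.swap b c i = i := by
            intro i hi
            apply Equiv.swap_apply_of_ne_of_ne
            · intro h; have h2 : (i : ℕ) = (b : ℕ) := congrArg Fin.val h; omega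
            · intro h; have h2 : (i : ℕ) = (c : ℕ) := congrArg Fin.val h; omega
          have fixfc : ∀ i : Fin n, (c : ℕ) + 1 ≤ (i : ℕ) → Equiv.swap f1 c i = i := by
            intro i hi
            apply Equiv.swap_apply_of_ne_of_ne
            · intro h; have h2 : (i : ℕ) = 1 := congrArg Fin.val h; omega
            · intro h; have h2 : (i : ℕ) = (c : ℕ) := congrArg Fin.val h; omega
          -- the conjugation identity
          have hswap : Xmat n f1 c * (Hmat n b c * s) = Hmat n b f1 * (Xmat n f1 c * s) := by
            conv_lhs => rw [show s = Xmat n f1 c * (Xmat n f1 c * s) from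
              (Xmat_invol f1 c s).symm]
            rw [conj_H f1 c b c hbc, Equiv.swap_apply_of_ne_of_ne hbf hbc,
              Equiv.swap_apply_right]
          -- states
          have e1 : gsem x1 * (wsem ([] : List (Gen n)) * s) =
              fun rr i => s (Equiv.swap b f1 rr) i := by
            simp [hx1, wsem, gsem, Xmat_mul]
            rfl
          have e2 : gsem xc * (wsem [x1] * s) =
              fun rr i => s (((Equiv.swap b c).trans (Equiv.swap b f1)) rr) i := by
            simp [hx1, hxc, wsem, gsem, Xmat_mul, Matrix.mul_assoc, Matrix.mul_one,
              Equiv.trans_apply]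
            erw [Xmat_mul]
          have e3 : gsem x1 * (wsem [xc, x1] * s) =
              fun rr i => s ((((Equiv.swap b f1).trans (Equiv.swap b c)).trans
                (Equiv.swap b f1)) rr) i := by
            simp only [hx1, hxc, wsem, gsem, Matrix.mul_one]
            rw [Matrix.mul_assoc]
            simp [Xmat_mul, Equiv.trans_apply]
            erw [Xmat_mul]
          have e4 : gsem h1 * (wsem [x1, xc, x1] * s) =
              fun rr i => r (Equiv.swap f1 c rr) i := by
            simp only [hx1, hxc, hh1, wsem, gsem, Matrix.mul_one, Matrix.mul_assoc]
            rw [conj_X b f1 b c, Equiv.swap_apply_left,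
              Equiv.swap_apply_of_ne_of_ne hcb hcf, ← hswap, hr]
            simp only [gsem]
            rw [Xmat_mul]
          have f4 : wsem [h1, x1, xc, x1] * s = fun rr i => r (Equiv.swap f1 c rr) i := by
            rw [show wsem [h1, x1, xc, x1] = gsem h1 * wsem [x1, xc, x1] from rfl,
              Matrix.mul_assoc, e4]
          have e5 : gsem x1 * (wsem [h1, x1, xc, x1] * s) =
              fun rr i => r (((Equiv.swap b f1).trans (Equiv.swap f1 c)) rr) i := by
            rw [f4]
            simp [hx1, gsem, Xmat_mul, Equiv.trans_apply]
            erw [Xmat_mul]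
          have f5 : wsem [x1, h1, x1, xc, x1] * s =
              fun rr i => r (((Equiv.swap b f1).trans (Equiv.swap f1 c)) rr) i := by
            rw [show wsem [x1, h1, x1, xc, x1] = gsem x1 * wsem [h1, x1, xc, x1] from rfl,
              Matrix.mul_assoc, e5]
          have e6 : gsem xc * (wsem [x1, h1, x1, xc, x1] * s) =
              fun rr i => r ((((Equiv.swap b c).trans (Equiv.swap b f1)).trans
                (Equiv.swap f1 c)) rr) i := by
            rw [f5]
            simp [hxc, gsem, Xmat_mul, Equiv.trans_apply]
            erw [Xmat_mul]
          have e7 : gsem x1 * (wsem [xc, x1, h1, x1, xc, x1] * s) = r := by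
            simp only [hx1, hxc, hh1, wsem, gsem, Matrix.mul_one, Matrix.mul_assoc]
            rw [conj_X b f1 b c, conj_X b f1 b c]
            simp only [Equiv.swap_apply_left, Equiv.swap_apply_of_ne_of_ne hcb hcf]
            rw [conj_H f1 c b f1 hbf]
            simp only [Equiv.swap_apply_left, Equiv.swap_apply_of_ne_of_ne hbf hbc]
            exact hr.symm
          -- level bounds
          have l1 : level (fun rr i => s (Equiv.swap b f1 rr) i) ≤
              max (level s) (toLex ((c : ℕ) + 1, toLex ((0:ℕ), (0:ℕ)))) :=
            level_perm_le _ _ fixb1 s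
          have l2 : level (fun rr i =>
              s (((Equiv.swap b c).trans (Equiv.swap b f1)) rr) i) ≤
              max (level s) (toLex ((c : ℕ) + 1, toLex ((0:ℕ), (0:ℕ)))) := by
            apply level_perm_le
            intro i hi
            simp [Equiv.trans_apply, fixb1 i hi, fixbc i hi]
          have l3 : level (fun rr i =>
              s ((((Equiv.swap b f1).trans (Equiv.swap b c)).trans
                (Equiv.swap b f1)) rr) i) ≤
              max (level s) (toLex ((c : ℕ) + 1, toLex ((0:ℕ), (0:ℕ)))) := by
            apply level_perm_le
            intro i hi
            simp [Equiv.trans_apply, fixb1 i hi, fixbc i hi]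
          have l4 : level (fun rr i => r (Equiv.swap f1 c rr) i) ≤
              max (level r) (toLex ((c : ℕ) + 1, toLex ((0:ℕ), (0:ℕ)))) :=
            level_perm_le _ _ fixfc r
          have l5 : level (fun rr i =>
              r (((Equiv.swap b f1).trans (Equiv.swap f1 c)) rr) i) ≤
              max (level r) (toLex ((c : ℕ) + 1, toLex ((0:ℕ), (0:ℕ)))) := by
            apply level_perm_le
            intro i hi
            simp [Equiv.trans_apply, fixb1 i hi, fixfc i hi]
          have l6 : level (fun rr i =>
              r ((((Equiv.swap b c).trans (Equiv.swap b f1)).trans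
                (Equiv.swap f1 c)) rr) i) ≤
              max (level r) (toLex ((c : ℕ) + 1, toLex ((0:ℕ), (0:ℕ)))) := by
            apply level_perm_le
            intro i hi
            simp [Equiv.trans_apply, fixb1 i hi, fixbc i hi, fixfc i hi]
          have hcrux : toLex ((c : ℕ) + 1, toLex ((0:ℕ), (0:ℕ))) ≤
              max (level s) (level r) := by
            apply crux s r c c
            intro hstd
            rw [hr]
            show (Hmat n b c * s) c c ≠ _
            rw [Hmat_mul b c hbc]
            simp only [if_neg hcb, if_pos rfl, hstd b, hstd c, if_neg hbc,
              eq_self_iff_true, if_true]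
            have hs2 : (0 : ℝ) < Real.sqrt 2 := Real.sqrt_pos.mpr (by norm_num)
            intro heq
            rw [div_eq_iff (ne_of_gt hs2)] at heq
            nlinarith
          have hms : max (level s) (toLex ((c : ℕ) + 1, toLex ((0:ℕ), (0:ℕ)))) ≤
              max (level s) (level r) := max_le (le_max_left _ _) hcrux
          have hmr : max (level r) (toLex ((c : ℕ) + 1, toLex ((0:ℕ), (0:ℕ)))) ≤
              max (level s) (level r) := max_le (le_max_right _ _) hcrux
          simp only [seqLevel]
          rw [e1, e2, e3, e4, e5, e6, e7]
          apply le_antisymm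
          · exact max_le (le_max_right _ _)
              (max_le (l6.trans hmr)
                (max_le (l5.trans hmr)
                  (max_le (l4.trans hmr)
                    (max_le (l3.trans hms)
                      (max_le (l2.trans hms)
                        (max_le (l1.trans hms) (le_max_left _ _)))))))
          · refine max_le ?_ (le_max_left _ _)
            exact le_max_of_le_right (le_max_of_le_right (le_max_of_le_right
              (le_max_of_le_right (le_max_of_le_right (le_max_of_le_right
                (le_max_right _ _))))))
    · -- b ≥ 1 : 9-generator word
      have hc2 : 2 ≤ (c : ℕ) := by omega
      have hn3 : 2 < n := lt_of_le_of_lt hc2 c.isLt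
      set z0 : Fin n := ⟨0, by omega⟩ with hz0d
      set f1 : Fin n := ⟨1, by omega⟩ with hf1d
      have hz1 : z0 ≠ f1 := by
        intro h; have h2 : (0 : ℕ) = 1 := congrArg Fin.val h; omega
      have hzb : z0 ≠ b := by
        intro h; have h2 : (0 : ℕ) = (b : ℕ) := congrArg Fin.val h; omega
      have hzc : z0 ≠ c := by
        intro h; have h2 : (0 : ℕ) = (c : ℕ) := congrArg Fin.val h; omega
      have hfc : f1 ≠ c := by
        intro h; have h2 : (1 : ℕ) = (c : ℕ) := congrArg Fin.val h; omega
      have hcf : c ≠ f1 := Ne.symm hfc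
      have hcz : c ≠ z0 := Ne.symm hzc
      set x0b : Gen n := Gen.X z0 b hzb with hx0b
      set x01 : Gen n := Gen.X z0 f1 hz1 with hx01
      set x0c : Gen n := Gen.X z0 c hzc with hx0c
      set h01 : Gen n := Gen.H z0 f1 hz1 with hh01
      set xf : Gen n := Gen.X f1 c hfc with hxf
      refine ⟨[x0b, x01, x0c, x01, h01, x01, x0c, x01, x0b], ?_, ?_, ?_⟩
      · intro g hg
        simp only [List.mem_cons, List.not_mem_nil, or_false, List.mem_singleton,
          hx0b, hx01, hx0c, hh01] at hg
        rcases hg with rfl | rfl | rfl | rfl | rfl | rfl | rfl | rfl | rfl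
        · exact rfl
        · exact rfl
        · exact rfl
        · exact rfl
        · exact ⟨rfl, rfl⟩
        · exact rfl
        · exact rfl
        · exact rfl
        · exact rfl
      · -- word relation
        have hT : WRel n [x01, x0c, x01] [xf] := by
          have rT1 : WRel n [x01, x0c] [xf, x01] :=
            (WRel.rel_xc2 z0 f1 c hz1 hzc hfc).symm
          have rT2 : WRel n [x01, x0c, x01] [xf, x01, x01] := by
            simpa using WRel.append_right [x01] rT1
          have rT3 : WRel n [xf, x01, x01] [xf] := by
            simpa using WRel.append_left [xf] (WRel.rel_xx z0 f1 hz1)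
          exact rT2.trans rT3
        have hmid : WRel n [xf, h01, xf] [Gen.H z0 c hzc] := by
          have m1 : WRel n [xf, h01] [Gen.H z0 c hzc, xf] :=
            (WRel.rel_hx5 z0 f1 c hz1 hzc hfc).symm
          have m2 : WRel n [xf, h01, xf] [Gen.H z0 c hzc, xf, xf] := by
            simpa using WRel.append_right [xf] m1
          have m3 : WRel n [Gen.H z0 c hzc, xf, xf] [Gen.H z0 c hzc] := by
            simpa using WRel.append_left [Gen.H z0 c hzc] (WRel.rel_xx f1 c hfc)
          exact m2.trans m3
        have t1 : WRel n [x0b, x01, x0c, x01, h01, x01, x0c, x01, x0b]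
            [x0b, xf, h01, x01, x0c, x01, x0b] := by
          simpa using WRel.append_left [x0b]
            (WRel.append_right [h01, x01, x0c, x01, x0b] hT)
        have t2 : WRel n [x0b, xf, h01, x01, x0c, x01, x0b]
            [x0b, xf, h01, xf, x0b] := by
          simpa using WRel.append_left [x0b, xf, h01] (WRel.append_right [x0b] hT)
        have t3 : WRel n [x0b, xf, h01, xf, x0b]
            [x0b, Gen.H z0 c hzc, x0b] := by
          simpa using WRel.append_left [x0b] (WRel.append_right [x0b] hmid)
        have t4 : WRel n [x0b, Gen.H z0 c hzc, x0b]
            [Gen.H b c hbc, x0b, x0b] := by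
          simpa using WRel.append_right [x0b] ((WRel.rel_hx4 z0 b c hzb hzc hbc).symm)
        have t5 : WRel n [Gen.H b c hbc, x0b, x0b] [Gen.H b c hbc] := by
          simpa using WRel.append_left [Gen.H b c hbc] (WRel.rel_xx z0 b hzb)
        exact t1.trans (t2.trans (t3.trans (t4.trans t5)))
      · -- level computation
        have fix0b : ∀ i : Fin n, (c : ℕ) + 1 ≤ (i : ℕ) → Equiv.swap z0 b i = i := by
          intro i hi
          apply Equiv.swap_apply_of_ne_of_ne
          · intro h; have h2 : (i : ℕ) = 0 := congrArg Fin.val h; omega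
          · intro h; have h2 : (i : ℕ) = (b : ℕ) := congrArg Fin.val h; omega
        have fix01 : ∀ i : Fin n, (c : ℕ) + 1 ≤ (i : ℕ) → Equiv.swap z0 f1 i = i := by
          intro i hi
          apply Equiv.swap_apply_of_ne_of_ne
          · intro h; have h2 : (i : ℕ) = 0 := congrArg Fin.val h; omega
          · intro h; have h2 : (i : ℕ) = 1 := congrArg Fin.val h; omega
        have fix0c : ∀ i : Fin n, (c : ℕ) + 1 ≤ (i : ℕ) → Equiv.swap z0 c i = i := by
          intro i hi
          apply Equiv.swap_apply_of_ne_of_ne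
          · intro h; have h2 : (i : ℕ) = 0 := congrArg Fin.val h; omega
          · intro h; have h2 : (i : ℕ) = (c : ℕ) := congrArg Fin.val h; omega
        have fixfc : ∀ i : Fin n, (c : ℕ) + 1 ≤ (i : ℕ) → Equiv.swap f1 c i = i := by
          intro i hi
          apply Equiv.swap_apply_of_ne_of_ne
          · intro h; have h2 : (i : ℕ) = 1 := congrArg Fin.val h; omega
          · intro h; have h2 : (i : ℕ) = (c : ℕ) := congrArg Fin.val h; omega
        have hfull : Xmat n z0 b * (Xmat n f1 c * (Hmat n z0 f1 *
            (Xmat n f1 c * (Xmat n z0 b * s)))) = r := by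
          rw [conj_H f1 c z0 f1 hz1, Equiv.swap_apply_of_ne_of_ne hz1 hzc,
            Equiv.swap_apply_left, conj_H z0 b z0 c hzc, Equiv.swap_apply_left,
            Equiv.swap_apply_of_ne_of_ne hcz hcb]
          exact hr.symm
        have h5m : Hmat n z0 f1 * (Xmat n f1 c * (Xmat n z0 b * s)) =
            Xmat n f1 c * (Xmat n z0 b * r) := by
          rw [← hfull, Xmat_invol, Xmat_invol]
        have e1 : gsem x0b * (wsem ([] : List (Gen n)) * s) =
            fun rr i => s (Equiv.swap z0 b rr) i := by
          simp [hx0b, wsem, gsem, Xmat_mul]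
          rfl
        have e2 : gsem x01 * (wsem [x0b] * s) =
            fun rr i => s (((Equiv.swap z0 f1).trans (Equiv.swap z0 b)) rr) i := by
          simp [hx0b, hx01, wsem, gsem, Xmat_mul, Matrix.mul_assoc, Matrix.mul_one,
            Equiv.trans_apply]
          erw [Xmat_mul]
        have e3 : gsem x0c * (wsem [x01, x0b] * s) =
            fun rr i => s ((((Equiv.swap z0 c).trans (Equiv.swap z0 f1)).trans
              (Equiv.swap z0 b)) rr) i := by
          simp only [hx0b, hx01, hx0c, wsem, gsem, Matrix.mul_one]
          rw [Matrix.mul_assoc]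
          simp [Xmat_mul, Equiv.trans_apply]
          erw [Xmat_mul]
        have e4 : gsem x01 * (wsem [x0c, x01, x0b] * s) =
            fun rr i => s (((((Equiv.swap z0 f1).trans (Equiv.swap z0 c)).trans
              (Equiv.swap z0 f1)).trans (Equiv.swap z0 b)) rr) i := by
          simp only [hx0b, hx01, hx0c, wsem, gsem, Matrix.mul_one]
          rw [Matrix.mul_assoc, Matrix.mul_assoc]
          simp [Xmat_mul, Equiv.trans_apply]
          erw [Xmat_mul, Xmat_mul]
        have e5 : gsem h01 * (wsem [x01, x0c, x01, x0b] * s) =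
            fun rr i => r (((Equiv.swap f1 c).trans (Equiv.swap z0 b)) rr) i := by
          simp only [hx0b, hx01, hx0c, hh01, wsem, gsem, Matrix.mul_one,
            Matrix.mul_assoc]
          rw [conj_X z0 f1 z0 c, Equiv.swap_apply_left,
            Equiv.swap_apply_of_ne_of_ne hcz hcf, h5m]
          simp [Xmat_mul, Equiv.trans_apply]
          erw [Xmat_mul]
        have f5 : wsem [h01, x01, x0c, x01, x0b] * s =
            fun rr i => r (((Equiv.swap f1 c).trans (Equiv.swap z0 b)) rr) i := by
          rw [show wsem [h01, x01, x0c, x01, x0b] =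
            gsem h01 * wsem [x01, x0c, x01, x0b] from rfl, Matrix.mul_assoc, e5]
        have e6 : gsem x01 * (wsem [h01, x01, x0c, x01, x0b] * s) =
            fun rr i => r (((Equiv.swap z0 f1).trans ((Equiv.swap f1 c).trans
              (Equiv.swap z0 b))) rr) i := by
          rw [f5]
          simp [hx01, gsem, Xmat_mul, Equiv.trans_apply]
          erw [Xmat_mul]
        have f6 : wsem [x01, h01, x01, x0c, x01, x0b] * s =
            fun rr i => r (((Equiv.swap z0 f1).trans ((Equiv.swap f1 c).trans
              (Equiv.swap z0 b))) rr) i := by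
          rw [show wsem [x01, h01, x01, x0c, x01, x0b] =
            gsem x01 * wsem [h01, x01, x0c, x01, x0b] from rfl, Matrix.mul_assoc, e6]
        have e7 : gsem x0c * (wsem [x01, h01, x01, x0c, x01, x0b] * s) =
            fun rr i => r (((Equiv.swap z0 c).trans ((Equiv.swap z0 f1).trans
              ((Equiv.swap f1 c).trans (Equiv.swap z0 b)))) rr) i := by
          rw [f6]
          simp [hx0c, gsem, Xmat_mul, Equiv.trans_apply]
          erw [Xmat_mul]
        have f7 : wsem [x0c, x01, h01, x01, x0c, x01, x0b] * s =
            fun rr i => r (((Equiv.swap z0 c).trans ((Equiv.swap z0 f1).trans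
              ((Equiv.swap f1 c).trans (Equiv.swap z0 b)))) rr) i := by
          rw [show wsem [x0c, x01, h01, x01, x0c, x01, x0b] =
            gsem x0c * wsem [x01, h01, x01, x0c, x01, x0b] from rfl,
            Matrix.mul_assoc, e7]
        have e8 : gsem x01 * (wsem [x0c, x01, h01, x01, x0c, x01, x0b] * s) =
            fun rr i => r (((Equiv.swap z0 f1).trans ((Equiv.swap z0 c).trans
              ((Equiv.swap z0 f1).trans ((Equiv.swap f1 c).trans
                (Equiv.swap z0 b))))) rr) i := by
          rw [f7]
          simp [hx01, gsem, Xmat_mul, Equiv.trans_apply]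
          erw [Xmat_mul]
        have e9 : gsem x0b * (wsem [x01, x0c, x01, h01, x01, x0c, x01, x0b] * s) = r := by
          simp only [hx0b, hx01, hx0c, hh01, wsem, gsem, Matrix.mul_one,
            Matrix.mul_assoc]
          rw [conj_X z0 f1 z0 c, conj_X z0 f1 z0 c]
          simp only [Equiv.swap_apply_left, Equiv.swap_apply_of_ne_of_ne hcz hcf]
          exact hfull
        have l1 : level (fun rr i => s (Equiv.swap z0 b rr) i) ≤
            max (level s) (toLex ((c : ℕ) + 1, toLex ((0:ℕ), (0:ℕ)))) :=
          level_perm_le _ _ fix0b s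
        have l2 : level (fun rr i =>
            s (((Equiv.swap z0 f1).trans (Equiv.swap z0 b)) rr) i) ≤
            max (level s) (toLex ((c : ℕ) + 1, toLex ((0:ℕ), (0:ℕ)))) := by
          apply level_perm_le
          intro i hi
          simp [Equiv.trans_apply, fix0b i hi, fix01 i hi]
        have l3 : level (fun rr i =>
            s ((((Equiv.swap z0 c).trans (Equiv.swap z0 f1)).trans
              (Equiv.swap z0 b)) rr) i) ≤
            max (level s) (toLex ((c : ℕ) + 1, toLex ((0:ℕ), (0:ℕ)))) := by
          apply level_perm_le
          intro i hi
          simp [Equiv.trans_apply, fix0b i hi, fix01 i hi, fix0c i hi]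
        have l4 : level (fun rr i =>
            s (((((Equiv.swap z0 f1).trans (Equiv.swap z0 c)).trans
              (Equiv.swap z0 f1)).trans (Equiv.swap z0 b)) rr) i) ≤
            max (level s) (toLex ((c : ℕ) + 1, toLex ((0:ℕ), (0:ℕ)))) := by
          apply level_perm_le
          intro i hi
          simp [Equiv.trans_apply, fix0b i hi, fix01 i hi, fix0c i hi]
        have l5 : level (fun rr i =>
            r (((Equiv.swap f1 c).trans (Equiv.swap z0 b)) rr) i) ≤
            max (level r) (toLex ((c : ℕ) + 1, toLex ((0:ℕ), (0:ℕ)))) := by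
          apply level_perm_le
          intro i hi
          simp [Equiv.trans_apply, fix0b i hi, fixfc i hi]
        have l6 : level (fun rr i =>
            r (((Equiv.swap z0 f1).trans ((Equiv.swap f1 c).trans
              (Equiv.swap z0 b))) rr) i) ≤
            max (level r) (toLex ((c : ℕ) + 1, toLex ((0:ℕ), (0:ℕ)))) := by
          apply level_perm_le
          intro i hi
          simp [Equiv.trans_apply, fix0b i hi, fix01 i hi, fixfc i hi]
        have l7 : level (fun rr i =>
            r (((Equiv.swap z0 c).trans ((Equiv.swap z0 f1).trans
              ((Equiv.swap f1 c).trans (Equiv.swap z0 b)))) rr) i) ≤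
            max (level r) (toLex ((c : ℕ) + 1, toLex ((0:ℕ), (0:ℕ)))) := by
          apply level_perm_le
          intro i hi
          simp [Equiv.trans_apply, fix0b i hi, fix01 i hi, fix0c i hi, fixfc i hi]
        have l8 : level (fun rr i =>
            r (((Equiv.swap z0 f1).trans ((Equiv.swap z0 c).trans
              ((Equiv.swap z0 f1).trans ((Equiv.swap f1 c).trans
                (Equiv.swap z0 b))))) rr) i) ≤
            max (level r) (toLex ((c : ℕ) + 1, toLex ((0:ℕ), (0:ℕ)))) := by
          apply level_perm_le
          intro i hi
          simp [Equiv.trans_apply, fix0b i hi, fix01 i hi, fix0c i hi, fixfc i hi]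
        have hcrux : toLex ((c : ℕ) + 1, toLex ((0:ℕ), (0:ℕ))) ≤
            max (level s) (level r) := by
          apply crux s r c c
          intro hstd
          rw [hr]
          show (Hmat n b c * s) c c ≠ _
          rw [Hmat_mul b c hbc]
          simp only [if_neg hcb, if_pos rfl, hstd b, hstd c, if_neg hbc,
            eq_self_iff_true, if_true]
          have hs2 : (0 : ℝ) < Real.sqrt 2 := Real.sqrt_pos.mpr (by norm_num)
          intro heq
          rw [div_eq_iff (ne_of_gt hs2)] at heq
          nlinarith
        have hms : max (level s) (toLex ((c : ℕ) + 1, toLex ((0:ℕ), (0:ℕ)))) ≤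
            max (level s) (level r) := max_le (le_max_left _ _) hcrux
        have hmr : max (level r) (toLex ((c : ℕ) + 1, toLex ((0:ℕ), (0:ℕ)))) ≤
            max (level s) (level r) := max_le (le_max_right _ _) hcrux
        simp only [seqLevel]
        rw [e1, e2, e3, e4, e5, e6, e7, e8, e9]
        apply le_antisymm
        · exact max_le (le_max_right _ _)
            (max_le (l8.trans hmr)
              (max_le (l7.trans hmr)
                (max_le (l6.trans hmr)
                  (max_le (l5.trans hmr)
                    (max_le (l4.trans hms)
                      (max_le (l3.trans hms)
                        (max_le (l2.trans hms)
                          (max_le (l1.trans hms) (le_max_left _ _)))))))))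
        · refine max_le ?_ (le_max_left _ _)
          exact le_max_of_le_right (le_max_of_le_right (le_max_of_le_right
            (le_max_of_le_right (le_max_of_le_right (le_max_of_le_right
              (le_max_of_le_right (le_max_of_le_right (le_max_right _ _))))))))
end
end
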